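/- arXiv:1704.02666 — 3 statements merged into one kernel-verified Lean document; each statement's English description precedes it below -/
import Mathlib

section
/- If F and G are left-orderable groups, then the free product F * G is left-orderable. -/
/-- A left-invariant strict total order on a group. -/
def IsLeftOrder {G : Type*} [Group G] (lt : G → G → Prop) : Prop :=
  IsStrictTotalOrder G lt ∧ ∀ x y z : G, lt x y → lt (z * x) (z * y)

namespace LOAux

variable {A : Type*} {B : Type*} [Group A] [Group B]

theorem lo_trans {lt : A → A → Prop} (h : IsLeftOrder lt) :
    ∀ {x y z}, lt x y → lt y z → lt x z :=
  fun {x y z} hxy hyz => h.1.toIsStrictOrder.toIsTrans.trans x y z hxy hyz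

theorem lo_irrefl {lt : A → A → Prop} (h : IsLeftOrder lt) (x : A) : ¬ lt x x :=
  by haveI := h.1; exact irrefl x

theorem lo_trichot {lt : A → A → Prop} (h : IsLeftOrder lt) (x y : A) :
    lt x y ∨ x = y ∨ lt y x :=
  by haveI := h.1; exact trichotomous x y

theorem lo_mk {lt : A → A → Prop}
    (htri : ∀ x y, lt x y ∨ x = y ∨ lt y x)
    (hirr : ∀ x, ¬ lt x x)
    (htrans : ∀ x y z, lt x y → lt y z → lt x z)
    (hinv : ∀ x y z : A, lt x y → lt (z * x) (z * y)) : IsLeftOrder lt :=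
  ⟨{ trichotomous := fun a b h1 h2 => ((htri a b).resolve_left h1).resolve_right h2, irrefl := hirr, trans := htrans }, hinv⟩

/-- Pull back a left order along an injective homomorphism. -/
theorem lo_comap {lt : B → B → Prop} (h : IsLeftOrder lt) (f : A →* B)
    (hf : Function.Injective f) : IsLeftOrder (fun x y => lt (f x) (f y)) := by
  refine lo_mk ?_ ?_ ?_ ?_
  · intro x y
    rcases lo_trichot h (f x) (f y) with h1 | h1 | h1
    · exact Or.inl h1
    · exact Or.inr (Or.inl (hf h1))
    · exact Or.inr (Or.inr h1)
  · intro x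
    exact lo_irrefl h (f x)
  · intro x y z h1 h2
    exact lo_trans h h1 h2
  · intro x y z hxy
    simpa [map_mul] using h.2 (f x) (f y) (f z) hxy

/-- Lexicographic product of left orders is a left order. -/
theorem lo_prodLex {ltA : A → A → Prop} {ltB : B → B → Prop}
    (hA : IsLeftOrder ltA) (hB : IsLeftOrder ltB) :
    IsLeftOrder (fun p q : A × B => ltA p.1 q.1 ∨ (p.1 = q.1 ∧ ltB p.2 q.2)) := by
  refine lo_mk ?_ ?_ ?_ ?_
  · intro ⟨x1, x2⟩ ⟨y1, y2⟩
    rcases lo_trichot hA x1 y1 with h1 | h1 | h1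
    · exact Or.inl (Or.inl h1)
    · rcases lo_trichot hB x2 y2 with h2 | h2 | h2
      · exact Or.inl (Or.inr ⟨h1, h2⟩)
      · subst h1; subst h2; exact Or.inr (Or.inl rfl)
      · exact Or.inr (Or.inr (Or.inr ⟨h1.symm, h2⟩))
    · exact Or.inr (Or.inr (Or.inl h1))
  · rintro ⟨x1, x2⟩ (h | ⟨-, h⟩)
    · exact lo_irrefl hA _ h
    · exact lo_irrefl hB _ h
  · rintro ⟨x1, x2⟩ ⟨y1, y2⟩ ⟨z1, z2⟩ (h1 | ⟨e1, h1⟩) (h2 | ⟨e2, h2⟩)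
    · exact Or.inl (lo_trans hA h1 h2)
    · simp only at e2 h1 ⊢; exact Or.inl (e2 ▸ h1)
    · simp only at e1 h2 ⊢; exact Or.inl (e1 ▸ h2)
    · exact Or.inr ⟨e1.trans e2, lo_trans hB h1 h2⟩
  · rintro ⟨x1, x2⟩ ⟨y1, y2⟩ ⟨z1, z2⟩ (h | ⟨e, h⟩)
    · exact Or.inl (hA.2 _ _ _ h)
    · exact Or.inr ⟨by simpa using congrArg (z1 * ·) e, hB.2 _ _ _ h⟩

theorem intLO : IsLeftOrder (fun x y : Multiplicative ℤ => x.toAdd < y.toAdd) := by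
  refine lo_mk ?_ ?_ ?_ ?_
  · intro x y
    rcases lt_trichotomy x.toAdd y.toAdd with h | h | h
    · exact Or.inl h
    · refine Or.inr (Or.inl ?_)
      exact Multiplicative.toAdd.injective h
    · exact Or.inr (Or.inr h)
  · exact fun x => lt_irrefl _
  · exact fun x y z => lt_trans
  · intro x y z h
    simpa using add_lt_add_left h z.toAdd

/-- A nontrivial element of a left-ordered group has nontrivial square. -/
theorem lo_sq_ne_one {lt : A → A → Prop} (h : IsLeftOrder lt) {x : A}
    (hx : x ≠ 1) : x * x ≠ 1 := by
  rcases lo_trichot h x 1 with h1 | h1 | h1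
  · -- x < 1 : x*x < x < 1
    intro hsq
    have h2 : lt (x * x) (x * 1) := h.2 _ _ x h1
    rw [mul_one] at h2
    have h3 : lt (x * x) 1 := lo_trans h h2 h1
    rw [hsq] at h3
    exact lo_irrefl h 1 h3
  · exact absurd h1 hx
  · intro hsq
    have h2 : lt (x * 1) (x * x) := h.2 _ _ x h1
    rw [mul_one] at h2
    have h3 : lt 1 (x * x) := lo_trans h h1 h2
    rw [hsq] at h3
    exact lo_irrefl h 1 h3

open Monoid.CoprodI

variable {ι : Type*} [DecidableEq ι] {M : ι → Type*} [∀ i, Group (M i)]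
  [∀ i, DecidableEq (M i)]

theorem smul_prepend {i : ι} (m : M i) (w : Word M) (h1 : w.fstIdx ≠ some i) (hm : m ≠ 1) :
    of m • w = Word.cons m w h1 hm :=
  (Word.cons_eq_smul).symm

theorem smul_merge {i : ι} (m m' : M i) (w : Word M) (h1 : w.fstIdx ≠ some i) (hm' : m' ≠ 1) :
    of m • (Word.cons m' w h1 hm') = of (m * m') • w := by
  rw [Word.cons_eq_smul, smul_smul, ← map_mul]

set_option linter.unusedSectionVars false in
theorem word_cases (w : Word M) : w = Word.empty ∨ ∃ (k : ι) (x : M k) (w' : Word M)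
    (h1 : w'.fstIdx ≠ some k) (hx : x ≠ 1), w = Word.cons x w' h1 hx := by
  induction w using Word.consRecOn with
  | empty => exact Or.inl rfl
  | cons k x w' h1 hx _ => exact Or.inr ⟨k, x, w', h1, hx, rfl⟩

/-- `w` starts with the two letters `⟨i, a⟩ ⟨j, b⟩`. -/
def startsWith (i j : ι) (a : M i) (b : M j) (w : Word M) : Prop :=
  ∃ l, w.toList = ⟨i, a⟩ :: ⟨j, b⟩ :: l

theorem startsWith_prepend2 {i j : ι} (hij : i ≠ j) {a : M i} {b : M j}
    (ha : a ≠ 1) (hb : b ≠ 1) (w : Word M) (h : w.fstIdx ≠ some j) :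
    startsWith i j a b (of a • (of b • w)) := by
  rw [smul_prepend b w h hb]
  rw [smul_prepend a _ (by simp [hij.symm]) ha]
  exact ⟨w.toList, by simp [Word.cons]⟩

theorem fstIdx_cons_ne {k k' : ι} (h : k ≠ k') (m : M k) (w : Word M) (h1) (hm) :
    (Word.cons m w h1 hm).fstIdx ≠ some k' := by simp [h]

/-- The master ping-pong computation. -/
theorem master {i j : ι} (hij : i ≠ j) {a : M i} {b : M j} (ha : a ≠ 1) (hb : b ≠ 1)
    (w : Word M) (hw : ¬ startsWith j i b a w) :
    startsWith i j a b ((of a * of b * of a⁻¹ * of b⁻¹) • w) := by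
  have hsmul : (of a * of b * of a⁻¹ * of b⁻¹) • w
      = of a • (of b • (of a⁻¹ • (of b⁻¹ • w))) := by
    simp only [mul_smul]
  rw [hsmul]
  have hemp : (Word.empty : Word M).fstIdx ≠ some j := by simp [Word.empty, Word.fstIdx]
  rcases word_cases w with rfl | ⟨k, x, w'', h1, hx, rfl⟩
  · -- empty word
    rw [smul_prepend b⁻¹ Word.empty hemp (inv_ne_one.2 hb)]
    rw [smul_prepend a⁻¹ _ (fstIdx_cons_ne hij.symm _ _ _ _) (inv_ne_one.2 ha)]
    exact startsWith_prepend2 hij ha hb _ (fstIdx_cons_ne hij _ _ _ _)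
  · by_cases hk : k = j
    · subst hk
      by_cases hbx : b⁻¹ * x = 1
      · -- first letter cancels : x = b
        have hxb : x = b := by rwa [inv_mul_eq_one, eq_comm] at hbx
        have hw1 : of b⁻¹ • (Word.cons x w'' h1 hx) = w'' := by
          rw [smul_merge, hbx, map_one, one_smul]
        rw [hw1]
        rcases word_cases w'' with rfl | ⟨k', y, w₃, h1', hy, rfl⟩
        · -- w = [b]
          rw [smul_prepend a⁻¹ Word.empty (by simp [Word.empty, Word.fstIdx]) (inv_ne_one.2 ha)]
          exact startsWith_prepend2 hij ha hb _ (fstIdx_cons_ne hij _ _ _ _)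
        · by_cases hk' : k' = i
          · subst hk'
            by_cases hay : a⁻¹ * y = 1
            · -- w starts with ⟨j,b⟩⟨i,a⟩ : contradiction
              exfalso
              apply hw
              have hya : y = a := by rwa [inv_mul_eq_one, eq_comm] at hay
              exact ⟨w₃.toList, by simp [Word.cons, hya, hxb]⟩
            · rw [smul_merge a⁻¹ y w₃ h1' hy]
              rw [smul_prepend (a⁻¹ * y) w₃ h1' hay]
              exact startsWith_prepend2 hij ha hb _ (fstIdx_cons_ne hij _ _ _ _)
          · -- k' ≠ i
            rw [smul_prepend a⁻¹ _ (fstIdx_cons_ne hk' _ _ _ _)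
              (inv_ne_one.2 ha)]
            exact startsWith_prepend2 hij ha hb _ (fstIdx_cons_ne hij _ _ _ _)
      · -- merge  b⁻¹ * x ≠ 1
        rw [smul_merge b⁻¹ x w'' h1 hx, smul_prepend (b⁻¹ * x) w'' h1 hbx]
        rw [smul_prepend a⁻¹ _ (fstIdx_cons_ne hij.symm _ _ _ _) (inv_ne_one.2 ha)]
        exact startsWith_prepend2 hij ha hb _ (fstIdx_cons_ne hij _ _ _ _)
    · -- k ≠ j : prepend everything
      rw [smul_prepend b⁻¹ _ (fstIdx_cons_ne hk _ _ _ _) (inv_ne_one.2 hb)]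
      rw [smul_prepend a⁻¹ _ (fstIdx_cons_ne hij.symm _ _ _ _) (inv_ne_one.2 ha)]
      exact startsWith_prepend2 hij ha hb _ (fstIdx_cons_ne hij _ _ _ _)

open Monoid

universe u v

section Setup

variable (F : Type u) (G : Type v) [Group F] [Group G]

/-- The two-element family of groups. -/
def Mfam : Bool → Type (max u v) := fun b => Bool.rec (ULift.{u} G) (ULift.{v} F) b

instance MfamGroup : ∀ b, Group (Mfam F G b) := fun b => by
  cases b
  · exact inferInstanceAs (Group (ULift.{u} G))
  · exact inferInstanceAs (Group (ULift.{v} F))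

/-- The free product as a `CoprodI`. -/
abbrev La := Monoid.CoprodI (Mfam F G)

/-- Embedding of `F`. -/
def ofF : ULift.{v} F →* La F G := (CoprodI.of : Mfam F G true →* _)

/-- Embedding of `G`. -/
def ofG : ULift.{u} G →* La F G := (CoprodI.of : Mfam F G false →* _)

/-- Index type for the commutator generators. -/
def Tgen : Type (max u v) := {a : ULift.{v} F // a ≠ 1} × {b : ULift.{u} G // b ≠ 1}

/-- The commutator generators of the kernel. -/
def cgen : Tgen F G → La F G := fun t =>
  ofF F G t.1.1 * ofG F G t.2.1 * (ofF F G t.1.1)⁻¹ * (ofG F G t.2.1)⁻¹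

/-- The projection to `F`. -/
def piF : La F G →* ULift.{v} F :=
  CoprodI.lift (fun b => Bool.rec (motive := fun b => Mfam F G b →* ULift.{v} F)
    1 (MonoidHom.id _) b)

/-- The projection to `G`. -/
def piG : La F G →* ULift.{u} G :=
  CoprodI.lift (fun b => Bool.rec (motive := fun b => Mfam F G b →* ULift.{u} G)
    (MonoidHom.id _) 1 b)

@[simp] theorem piF_ofF (x : ULift.{v} F) : piF F G (ofF F G x) = x :=
  CoprodI.lift_of _ _

@[simp] theorem piF_ofG (y : ULift.{u} G) : piF F G (ofG F G y) = 1 :=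
  CoprodI.lift_of _ _

@[simp] theorem piG_ofG (y : ULift.{u} G) : piG F G (ofG F G y) = y :=
  CoprodI.lift_of _ _

@[simp] theorem piG_ofF (x : ULift.{v} F) : piG F G (ofF F G x) = 1 :=
  CoprodI.lift_of _ _

end Setup

section PingPong

variable (F : Type u) (G : Type v) [Group F] [Group G]

open scoped Pointwise

/-- Ping-pong set `X`. -/
def Xset (t : Tgen F G) : Set (Word (Mfam F G)) :=
  {w | startsWith true false t.1.1 t.2.1 w}

/-- Ping-pong set `Y`. -/
def Yset (t : Tgen F G) : Set (Word (Mfam F G)) :=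
  {w | startsWith false true t.2.1 t.1.1 w}

theorem cgen_inv (t : Tgen F G) :
    (cgen F G t)⁻¹ = ofG F G t.2.1 * ofF F G t.1.1 * ofG F G (t.2.1⁻¹) * ofF F G (t.1.1⁻¹) := by
  simp [cgen, map_inv, mul_assoc]

theorem lift_cgen_injective (hT : Nontrivial (Tgen F G)) :
    Function.Injective (FreeGroup.lift (cgen F G)) := by
  classical
  have : Nontrivial (Tgen F G) := hT
  apply FreeGroup.injective_lift_of_ping_pong (cgen F G) (Xset F G) (Yset F G)
  · -- nonempty
    intro t
    refine ⟨Word.cons (i := true) t.1.1 (Word.cons (i := false) t.2.1 Word.empty (by simp [Word.empty, Word.fstIdx])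
      t.2.2) (fstIdx_cons_ne (show (false:Bool) ≠ true by simp) _ _ _ _) t.1.2, ?_⟩
    exact ⟨[], by simp [Word.cons]⟩
  · -- X disjoint
    intro t t' htt'
    rw [Function.onFun, Set.disjoint_left]
    rintro w ⟨l, hl⟩ ⟨l', hl'⟩
    rw [hl] at hl'
    apply htt'
    obtain ⟨h1, h2⟩ := List.cons_eq_cons.mp hl'
    obtain ⟨h3, -⟩ := List.cons_eq_cons.mp h2
    have e1 : t'.1.1 = t.1.1 := by
      have := (Sigma.mk.inj_iff.mp h1).2
      exact eq_of_heq this.symm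
    have e2 : t'.2.1 = t.2.1 := by
      have := (Sigma.mk.inj_iff.mp h3).2
      exact eq_of_heq this.symm
    exact Prod.ext (Subtype.ext e1.symm) (Subtype.ext e2.symm)
  · -- Y disjoint
    intro t t' htt'
    rw [Function.onFun, Set.disjoint_left]
    rintro w ⟨l, hl⟩ ⟨l', hl'⟩
    rw [hl] at hl'
    apply htt'
    obtain ⟨h1, h2⟩ := List.cons_eq_cons.mp hl'
    obtain ⟨h3, -⟩ := List.cons_eq_cons.mp h2
    have e1 : t'.2.1 = t.2.1 := by
      have := (Sigma.mk.inj_iff.mp h1).2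
      exact eq_of_heq this.symm
    have e2 : t'.1.1 = t.1.1 := by
      have := (Sigma.mk.inj_iff.mp h3).2
      exact eq_of_heq this.symm
    exact Prod.ext (Subtype.ext e2.symm) (Subtype.ext e1.symm)
  · -- X and Y disjoint
    intro t t'
    rw [Set.disjoint_left]
    rintro w ⟨l, hl⟩ ⟨l', hl'⟩
    rw [hl] at hl'
    have := (List.cons_eq_cons.mp hl').1
    simpa using (Sigma.mk.inj_iff.mp this).1
  · -- c t • (Y t)ᶜ ⊆ X t
    intro t
    rintro v ⟨w, hw, rfl⟩
    exact master (by simp) t.1.2 t.2.2 w hw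
  · -- (c t)⁻¹ • (X t)ᶜ ⊆ Y t
    intro t
    rintro v ⟨w, hw, rfl⟩
    show ((cgen F G)⁻¹ t) • w ∈ Yset F G t
    rw [Pi.inv_apply, cgen_inv]
    exact master (M := Mfam F G) (by simp : (false:Bool) ≠ true) t.2.2 t.1.2 w hw

end PingPong

section Generation

variable (F : Type u) (G : Type v) [Group F] [Group G]

open Classical in
/-- Commutator, extended by `1` when either entry is trivial. -/
noncomputable def ec (a : ULift.{v} F) (b : ULift.{u} G) : La F G :=
  if a = 1 ∨ b = 1 then 1
  else ofF F G a * ofG F G b * (ofF F G a)⁻¹ * (ofG F G b)⁻¹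

theorem cgen_eq_ec (t : Tgen F G) : cgen F G t = ec F G t.1.1 t.2.1 := by
  rw [ec, if_neg (by push_neg; exact ⟨t.1.2, t.2.2⟩)]
  rfl

theorem idSwap (x : ULift.{v} F) (y : ULift.{u} G) :
    ofG F G y * ofF F G x = (ec F G x y)⁻¹ * (ofF F G x * ofG F G y) := by
  by_cases hx : x = 1
  · simp [ec, hx]
  by_cases hy : y = 1
  · simp [ec, hy]
  rw [ec, if_neg (by push_neg; exact ⟨hx, hy⟩)]
  group

theorem idF (x a : ULift.{v} F) (b : ULift.{u} G) :
    ofF F G x * ec F G a b * (ofF F G x)⁻¹ = ec F G (x * a) b * (ec F G x b)⁻¹ := by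
  by_cases ha : a = 1
  · subst ha
    have e1 : ec F G 1 b = 1 := by rw [ec, if_pos (Or.inl rfl)]
    simp [e1]
  by_cases hb : b = 1
  · simp [ec, hb]
  by_cases hx : x = 1
  · simp [ec, hx, ha, hb]
  by_cases hxa : x * a = 1
  · have hx' : x = a⁻¹ := eq_inv_of_mul_eq_one_left hxa
    subst hx'
    rw [ec, ec, ec, if_neg (by push_neg; exact ⟨ha, hb⟩), if_pos (Or.inl hxa),
      if_neg (by push_neg; exact ⟨hx, hb⟩)]
    simp only [map_inv]
    group
  · rw [ec, ec, ec, if_neg (by push_neg; exact ⟨ha, hb⟩),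
      if_neg (by push_neg; exact ⟨hxa, hb⟩), if_neg (by push_neg; exact ⟨hx, hb⟩)]
    simp only [map_mul]
    group

theorem idG (y : ULift.{u} G) (a : ULift.{v} F) (b : ULift.{u} G) :
    ofG F G y * ec F G a b * (ofG F G y)⁻¹ = (ec F G a y)⁻¹ * ec F G a (y * b) := by
  by_cases ha : a = 1
  · simp [ec, ha]
  by_cases hb : b = 1
  · subst hb
    have e1 : ec F G a 1 = 1 := by rw [ec, if_pos (Or.inr rfl)]
    simp [e1]
  by_cases hy : y = 1
  · simp [ec, hy, ha, hb]
  by_cases hyb : y * b = 1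
  · have hy' : y = b⁻¹ := eq_inv_of_mul_eq_one_left hyb
    subst hy'
    rw [ec, ec, ec, if_neg (by push_neg; exact ⟨ha, hb⟩),
      if_neg (by push_neg; exact ⟨ha, hy⟩), if_pos (Or.inr hyb)]
    simp only [map_inv]
    group
  · rw [ec, ec, ec, if_neg (by push_neg; exact ⟨ha, hb⟩),
      if_neg (by push_neg; exact ⟨ha, hy⟩), if_neg (by push_neg; exact ⟨ha, hyb⟩)]
    simp only [map_mul]
    group

/-- The subgroup generated by the commutators. -/
def Rsub : Subgroup (La F G) := Subgroup.closure (Set.range (cgen F G))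

theorem ec_mem (a : ULift.{v} F) (b : ULift.{u} G) : ec F G a b ∈ Rsub F G := by
  by_cases h : a = 1 ∨ b = 1
  · rw [ec, if_pos h]; exact one_mem _
  · push_neg at h
    have : ec F G a b = cgen F G ⟨⟨a, h.1⟩, ⟨b, h.2⟩⟩ := (cgen_eq_ec F G ⟨⟨a, h.1⟩, ⟨b, h.2⟩⟩).symm
    rw [this]
    exact Subgroup.subset_closure ⟨_, rfl⟩

theorem conjF_mem (x : ULift.{v} F) {k : La F G} (hk : k ∈ Rsub F G) :
    ofF F G x * k * (ofF F G x)⁻¹ ∈ Rsub F G := by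
  induction hk using Subgroup.closure_induction with
  | mem g hg =>
    obtain ⟨t, rfl⟩ := hg
    rw [cgen_eq_ec, idF]
    exact mul_mem (ec_mem F G _ _) (inv_mem (ec_mem F G _ _))
  | one => simpa using one_mem _
  | mul g g' hg hg' ih ih' =>
    have : ofF F G x * (g * g') * (ofF F G x)⁻¹
        = (ofF F G x * g * (ofF F G x)⁻¹) * (ofF F G x * g' * (ofF F G x)⁻¹) := by group
    rw [this]; exact mul_mem ih ih'
  | inv g hg ih =>
    have : ofF F G x * g⁻¹ * (ofF F G x)⁻¹ = (ofF F G x * g * (ofF F G x)⁻¹)⁻¹ := by group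
    rw [this]; exact inv_mem ih

theorem conjG_mem (y : ULift.{u} G) {k : La F G} (hk : k ∈ Rsub F G) :
    ofG F G y * k * (ofG F G y)⁻¹ ∈ Rsub F G := by
  induction hk using Subgroup.closure_induction with
  | mem g hg =>
    obtain ⟨t, rfl⟩ := hg
    rw [cgen_eq_ec, idG]
    exact mul_mem (inv_mem (ec_mem F G _ _)) (ec_mem F G _ _)
  | one => simpa using one_mem _
  | mul g g' hg hg' ih ih' =>
    have : ofG F G y * (g * g') * (ofG F G y)⁻¹
        = (ofG F G y * g * (ofG F G y)⁻¹) * (ofG F G y * g' * (ofG F G y)⁻¹) := by group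
    rw [this]; exact mul_mem ih ih'
  | inv g hg ih =>
    have : ofG F G y * g⁻¹ * (ofG F G y)⁻¹ = (ofG F G y * g * (ofG F G y)⁻¹)⁻¹ := by group
    rw [this]; exact inv_mem ih

@[simp] theorem piF_of_true (m : Mfam F G true) : piF F G (CoprodI.of m) = m :=
  CoprodI.lift_of _ _

@[simp] theorem piF_of_false (m : Mfam F G false) : piF F G (CoprodI.of m) = 1 :=
  CoprodI.lift_of _ _

@[simp] theorem piG_of_false (m : Mfam F G false) : piG F G (CoprodI.of m) = m :=
  CoprodI.lift_of _ _

@[simp] theorem piG_of_true (m : Mfam F G true) : piG F G (CoprodI.of m) = 1 :=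
  CoprodI.lift_of _ _

theorem decomp (w : La F G) :
    ∃ k ∈ Rsub F G, w = k * ofF F G (piF F G w) * ofG F G (piG F G w) := by
  induction w using Monoid.CoprodI.induction_on with
  | one => exact ⟨1, one_mem _, by simp⟩
  | of i m =>
    cases i
    · refine ⟨1, one_mem _, ?_⟩
      simp only [piF_of_false, piG_of_false, map_one, one_mul]
      rfl
    · refine ⟨1, one_mem _, ?_⟩
      simp only [piF_of_true, piG_of_true, map_one, mul_one, one_mul]
      rfl
  | mul x y hx hy =>
    obtain ⟨kx, hkx, ex⟩ := hx
    obtain ⟨ky, hky, ey⟩ := hy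
    refine ⟨kx * (ofF F G (piF F G x) * (ofG F G (piG F G x) * ky * (ofG F G (piG F G x))⁻¹)
        * (ofF F G (piF F G x))⁻¹)
        * (ofF F G (piF F G x) * (ec F G (piF F G y) (piG F G x))⁻¹ * (ofF F G (piF F G x))⁻¹),
      ?_, ?_⟩
    · exact mul_mem (mul_mem hkx (conjF_mem F G _ (conjG_mem F G _ hky)))
        (conjF_mem F G _ (inv_mem (ec_mem F G _ _)))
    · have hE : (ec F G (piF F G y) (piG F G x))⁻¹
          = ofG F G (piG F G x) * ofF F G (piF F G y) * (ofG F G (piG F G x))⁻¹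
            * (ofF F G (piF F G y))⁻¹ := by
        rw [idSwap]
        group
      conv_lhs => rw [ex, ey]
      rw [map_mul (piF F G), map_mul (piG F G), map_mul (ofF F G), map_mul (ofG F G), hE]
      group

end Generation

section Trichotomy

variable (F : Type u) (G : Type v) [Group F] [Group G]

/-- The common target group for Burns–Hale homomorphisms. -/
abbrev Lhat := (ULift.{v} F × ULift.{u} G) × Multiplicative ℤ

theorem freegroup_eq_one_of_isEmpty {X : Type*} [IsEmpty X] (g : FreeGroup X) : g = 1 := by
  induction g using FreeGroup.induction_on with
  | C1 => rfl
  | of x => exact isEmptyElim x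
  | inv_of x _ => exact isEmptyElim x
  | mul x y hx hy => rw [hx, hy, one_mul]

theorem exists_hom (hT : Nontrivial (Tgen F G)) (S : Finset (La F G))
    (h1 : (1 : La F G) ∉ S) (hne : S.Nonempty) :
    ∃ (φ : ↥(Subgroup.closure (S : Set (La F G))) →* Lhat F G) (s : La F G) (hs : s ∈ S),
      φ ⟨s, Subgroup.subset_closure hs⟩ ≠ 1 := by
  classical
  by_cases hF1 : ∃ s ∈ S, piF F G s ≠ 1
  · obtain ⟨s, hs, hval⟩ := hF1
    refine ⟨((MonoidHom.inl _ _).comp (MonoidHom.inl (ULift.{v} F) (ULift.{u} G))).comp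
      ((piF F G).comp (Subgroup.subtype _)), s, hs, ?_⟩
    intro h
    exact hval (congrArg (fun p => p.1.1) h)
  by_cases hG1 : ∃ s ∈ S, piG F G s ≠ 1
  · obtain ⟨s, hs, hval⟩ := hG1
    refine ⟨((MonoidHom.inl _ _).comp (MonoidHom.inr (ULift.{v} F) (ULift.{u} G))).comp
      ((piG F G).comp (Subgroup.subtype _)), s, hs, ?_⟩
    intro h
    exact hval (congrArg (fun p => p.1.2) h)
  · push_neg at hF1 hG1
    set H : Subgroup (La F G) := Subgroup.closure (S : Set (La F G)) with hH
    have HsubR : H ≤ Rsub F G := by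
      rw [hH]
      apply (Subgroup.closure_le _).2
      intro s hs
      obtain ⟨k, hk, e⟩ := decomp F G s
      rw [hF1 s hs, hG1 s hs] at e
      simpa [e] using hk
    have Φinj : Function.Injective (FreeGroup.lift (cgen F G)) := lift_cgen_injective F G hT
    have HsubRange : ∀ h ∈ H, h ∈ (FreeGroup.lift (cgen F G)).range := by
      intro h hh
      have : Rsub F G ≤ (FreeGroup.lift (cgen F G)).range := by
        apply (Subgroup.closure_le _).2
        rintro g ⟨t, rfl⟩
        exact ⟨FreeGroup.of t, FreeGroup.lift_apply_of⟩
      exact this (HsubR hh)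
    set H₀ : Subgroup (FreeGroup (Tgen F G)) := Subgroup.comap (FreeGroup.lift (cgen F G)) H
      with hH₀
    have hmem : ∀ x : H₀, FreeGroup.lift (cgen F G) x.1 ∈ H := fun x => x.2
    let φH : H₀ →* H :=
      MonoidHom.codRestrict ((FreeGroup.lift (cgen F G)).comp H₀.subtype) H (fun x => x.2)
    have hbij : Function.Bijective φH := by
      constructor
      · intro a b hab
        exact Subtype.ext (Φinj (congrArg Subtype.val hab))
      · intro h
        obtain ⟨x, hx⟩ := HsubRange h.1 h.2
        refine ⟨⟨x, ?_⟩, ?_⟩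
        · rw [hH₀, Subgroup.mem_comap, hx]; exact h.2
        · exact Subtype.ext hx
    let equivH : H₀ ≃* H := MulEquiv.ofBijective φH hbij
    obtain ⟨s₀, hs₀⟩ := hne
    have hs₀ne : s₀ ≠ 1 := fun h => h1 (h ▸ hs₀)
    have hH₀nontriv : ∃ x : H₀, x ≠ 1 := by
      refine ⟨equivH.symm ⟨s₀, Subgroup.subset_closure hs₀⟩, fun h => hs₀ne ?_⟩
      have := congrArg equivH h
      rw [MulEquiv.apply_symm_apply, map_one] at this
      exact congrArg Subtype.val this
    have hgen : Nonempty (IsFreeGroup.Generators H₀) := by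
      by_contra hempty
      have hie : IsEmpty (IsFreeGroup.Generators H₀) := not_nonempty_iff.mp hempty
      obtain ⟨x₀, hx₀⟩ := hH₀nontriv
      apply hx₀
      have h2 : (IsFreeGroup.toFreeGroup H₀) x₀ = 1 := freegroup_eq_one_of_isEmpty _
      have := congrArg (IsFreeGroup.toFreeGroup H₀).symm h2
      rwa [MulEquiv.symm_apply_apply, map_one] at this
    obtain ⟨g₀⟩ := hgen
    let ψ₀ : H₀ →* Multiplicative ℤ :=
      IsFreeGroup.lift (fun _ => Multiplicative.ofAdd (1 : ℤ))
    let φ : H →* Lhat F G :=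
      (MonoidHom.inr _ _).comp (ψ₀.comp (equivH.symm.toMonoidHom))
    by_contra hall
    push_neg at hall
    have hall' : ∀ (g : La F G) (hg : g ∈ H), φ ⟨g, hg⟩ = 1 := by
      intro g hg
      induction hg using Subgroup.closure_induction with
      | mem g hgS =>
        have := hall φ g hgS
        simpa using this
      | one =>
        have : (⟨1, _⟩ : H) = (1 : H) := rfl
        rw [this, map_one]
      | mul g g' hg hg' ih ih' =>
        have : (⟨g * g', _⟩ : H) = ⟨g, hg⟩ * ⟨g', hg'⟩ := rfl
        rw [this, map_mul, ih, ih', one_mul]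
      | inv g hg ih =>
        have : (⟨g⁻¹, _⟩ : H) = (⟨g, hg⟩ : H)⁻¹ := rfl
        rw [this, map_inv, ih, inv_one]
    have hval : φ (equivH (IsFreeGroup.of g₀)) ≠ 1 := by
      have e1 : φ (equivH (IsFreeGroup.of g₀))
          = (MonoidHom.inr _ _) (ψ₀ (IsFreeGroup.of g₀)) := by
        simp [φ, MulEquiv.symm_apply_apply]
      rw [e1]
      intro h
      have h2 : ψ₀ (IsFreeGroup.of g₀) = 1 := congrArg (fun p => p.2) h
      rw [show ψ₀ (IsFreeGroup.of g₀) = Multiplicative.ofAdd (1 : ℤ) from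
        IsFreeGroup.lift_of _ _] at h2
      simpa using h2
    exact hval (hall' _ _)

end Trichotomy

section PosInSec

variable {A : Type*} [Group A]

/-- `g` is a nonempty product of elements of `s`. -/
def PosIn (s : Set A) (g : A) : Prop :=
  ∃ l : List A, l ≠ [] ∧ (∀ x ∈ l, x ∈ s) ∧ l.prod = g

theorem PosIn.single {s : Set A} {x : A} (hx : x ∈ s) : PosIn s x :=
  ⟨[x], by simp, by simpa using hx, by simp⟩

theorem PosIn.mul {s : Set A} {x y : A} (hx : PosIn s x) (hy : PosIn s y) :
    PosIn s (x * y) := by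
  obtain ⟨l, hl, hls, rfl⟩ := hx
  obtain ⟨l', hl', hls', rfl⟩ := hy
  refine ⟨l ++ l', by simp [hl], ?_, by simp⟩
  intro z hz
  rcases List.mem_append.mp hz with h | h
  exacts [hls z h, hls' z h]

theorem PosIn.mono {s t : Set A} (hst : s ⊆ t) {x : A} (hx : PosIn s x) : PosIn t x := by
  obtain ⟨l, hl, hls, rfl⟩ := hx
  exact ⟨l, hl, fun z hz => hst (hls z hz), rfl⟩

/-- The element `s` or its inverse, according to the sign `ε s`. -/
def signedOf (ε : A → Bool) (s : A) : A := if ε s then s else s⁻¹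

theorem lo_pos_mul {lt : A → A → Prop} (h : IsLeftOrder lt) {a b : A}
    (ha : lt 1 a) (hb : lt 1 b) : lt 1 (a * b) := by
  have := h.2 1 b a
  rw [mul_one] at this
  exact lo_trans h ha (this hb)

theorem lo_pos_inv {lt : A → A → Prop} (h : IsLeftOrder lt) {a : A}
    (hnot : ¬ lt 1 a) (hne : a ≠ 1) : lt 1 a⁻¹ := by
  rcases lo_trichot h 1 a with h1 | h1 | h1
  · exact absurd h1 hnot
  · exact absurd h1.symm hne
  · have := h.2 a 1 a⁻¹
    rw [inv_mul_cancel, mul_one] at this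
    exact this h1

end PosInSec

section SignLemma

variable (F : Type u) (G : Type v) [Group F] [Group G]

theorem sign_lemma {ltL : Lhat F G → Lhat F G → Prop} (loh : IsLeftOrder ltL)
    (hT : Nontrivial (Tgen F G)) :
    ∀ (n : ℕ) (S : Finset (La F G)), S.card ≤ n → (1 : La F G) ∉ S →
      ∃ ε : La F G → Bool,
        ¬ PosIn (signedOf ε '' (S : Set (La F G))) 1 := by
  intro n
  induction n with
  | zero =>
    intro S hcard h1
    refine ⟨fun _ => true, ?_⟩
    rintro ⟨l, hl, hmem, hprod⟩
    obtain ⟨x, hx⟩ := List.exists_mem_of_ne_nil l hl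
    have hmx := hmem x hx
    have hS : S = ∅ := Finset.card_eq_zero.mp (Nat.le_zero.mp hcard)
    rw [hS] at hmx
    simpa using hmx
  | succ n ih =>
    intro S hcard h1
    classical
    rcases Finset.eq_empty_or_nonempty S with rfl | hne
    · refine ⟨fun _ => true, ?_⟩
      rintro ⟨l, hl, hmem, hprod⟩
      obtain ⟨x, hx⟩ := List.exists_mem_of_ne_nil l hl
      simpa using hmem x hx
    obtain ⟨φ, sstar, hsstar, hval⟩ := exists_hom F G hT S h1 hne
    set q : La F G → Prop :=
      fun g => ∃ hg : g ∈ Subgroup.closure (S : Set (La F G)), φ ⟨g, hg⟩ ≠ 1 with hq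
    set S1 : Finset (La F G) := S.filter q with hS1
    set S0 : Finset (La F G) := S.filter (fun g => ¬ q g) with hS0
    have hsstarS1 : sstar ∈ S1 := by
      rw [hS1, Finset.mem_filter]
      exact ⟨hsstar, ⟨_, hval⟩⟩
    have hS0sub : S0 ⊆ S := Finset.filter_subset _ _
    have hS0card : S0.card ≤ n := by
      have hlt : S0.card < S.card := by
        apply Finset.card_lt_card
        constructor
        · exact hS0sub
        · intro hSsub
          have := hSsub hsstar
          rw [hS0, Finset.mem_filter] at this
          rw [hS1, Finset.mem_filter] at hsstarS1
          exact this.2 hsstarS1.2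
      omega
    obtain ⟨ε0, hε0⟩ := ih S0 hS0card (fun h => h1 (hS0sub h))
    set ε : La F G → Bool := fun g =>
      if hg : g ∈ Subgroup.closure (S : Set (La F G)) then
        (if q g then decide (ltL 1 (φ ⟨g, hg⟩)) else ε0 g)
      else ε0 g with hε
    refine ⟨ε, ?_⟩
    -- entry dichotomy
    have ED : ∀ s ∈ S, ∃ hg : signedOf ε s ∈ Subgroup.closure (S : Set (La F G)),
        (ltL 1 (φ ⟨signedOf ε s, hg⟩) ∨ (φ ⟨signedOf ε s, hg⟩ = 1 ∧
          signedOf ε s ∈ signedOf ε0 '' (S0 : Set (La F G)))) := by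
      intro s hs
      have hscl : s ∈ Subgroup.closure (S : Set (La F G)) := Subgroup.subset_closure hs
      by_cases hqs : q s
      · have hεs : ε s = decide (ltL 1 (φ ⟨s, hscl⟩)) := by
          rw [hε]
          simp only
          rw [dif_pos hscl, if_pos hqs]
        obtain ⟨hg', hφne⟩ := hqs
        by_cases hlt : ltL 1 (φ ⟨s, hscl⟩)
        · have hsign : signedOf ε s = s := by
            rw [signedOf, hεs, decide_eq_true hlt, if_pos rfl]
          rw [hsign]
          exact ⟨hscl, Or.inl hlt⟩
        · have hsign : signedOf ε s = s⁻¹ := by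
            rw [signedOf, hεs, decide_eq_false hlt]
            simp
          rw [hsign]
          refine ⟨inv_mem hscl, Or.inl ?_⟩
          have hφinv : φ ⟨s⁻¹, inv_mem hscl⟩ = (φ ⟨s, hscl⟩)⁻¹ := by
            rw [show (⟨s⁻¹, inv_mem hscl⟩ : Subgroup.closure (S : Set (La F G)))
              = (⟨s, hscl⟩)⁻¹ from rfl, map_inv]
          rw [hφinv]
          exact lo_pos_inv loh hlt (fun h => hφne (by rw [show φ ⟨s, hg'⟩ = φ ⟨s, hscl⟩ from rfl, h]))
      · have hεs : ε s = ε0 s := by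
          rw [hε]
          simp only
          rw [dif_pos hscl, if_neg hqs]
        have hφ1 : ∀ hg : s ∈ Subgroup.closure (S : Set (La F G)), φ ⟨s, hg⟩ = 1 := by
          intro hg
          by_contra hcon
          exact hqs ⟨hg, hcon⟩
        have hsS0 : s ∈ S0 := by rw [hS0, Finset.mem_filter]; exact ⟨hs, hqs⟩
        by_cases hb : ε0 s = true
        · have hsign : signedOf ε s = s := by rw [signedOf, hεs, hb, if_pos rfl]
          rw [hsign]
          refine ⟨hscl, Or.inr ⟨hφ1 hscl, ⟨s, hsS0, ?_⟩⟩⟩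
          rw [signedOf, hb, if_pos rfl]
        · have hb' : ε0 s = false := by simpa using hb
          have hsign : signedOf ε s = s⁻¹ := by rw [signedOf, hεs, hb']; simp
          rw [hsign]
          refine ⟨inv_mem hscl, Or.inr ⟨?_, ⟨s, hsS0, ?_⟩⟩⟩
          · rw [show (⟨s⁻¹, inv_mem hscl⟩ : Subgroup.closure (S : Set (La F G)))
              = (⟨s, hscl⟩)⁻¹ from rfl, map_inv, hφ1 hscl, inv_one]
          · rw [signedOf, hb']; simp
    -- the invariant
    have aux : ∀ l : List (La F G), (∀ x ∈ l, x ∈ signedOf ε '' (S : Set (La F G))) →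
        l ≠ [] → ∃ hg : l.prod ∈ Subgroup.closure (S : Set (La F G)),
          (ltL 1 (φ ⟨l.prod, hg⟩) ∨ (φ ⟨l.prod, hg⟩ = 1 ∧
            PosIn (signedOf ε0 '' (S0 : Set (La F G))) l.prod)) := by
      intro l
      induction l with
      | nil => intro _ h; exact absurd rfl h
      | cons x l' ihl =>
        intro hmem _
        obtain ⟨s, hsS, hxs⟩ := hmem x List.mem_cons_self
        have hED' := ED s hsS
        rw [hxs] at hED'
        obtain ⟨hgx, hEDx⟩ := hED'
        rcases List.eq_nil_or_concat l' with rfl | hl'ne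
        · refine ⟨by simpa using hgx, ?_⟩
          have : (x :: ([] : List (La F G))).prod = x := by simp
          rcases hEDx with h | ⟨h1, h2⟩
          · left
            rw [show (⟨(x :: ([] : List (La F G))).prod, _⟩ :
                Subgroup.closure (S : Set (La F G))) = ⟨x, hgx⟩ from by simp [this]]
            exact h
          · right
            constructor
            · rw [show (⟨(x :: ([] : List (La F G))).prod, _⟩ :
                Subgroup.closure (S : Set (La F G))) = ⟨x, hgx⟩ from by simp [this]]
              exact h1
            · rw [this]
              exact PosIn.single h2
        · have hl'nenil : l' ≠ [] := by
            rcases hl'ne with ⟨l'', a, rfl⟩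
            simp
          obtain ⟨hgl', hIH⟩ := ihl (fun z hz => hmem z (List.mem_cons_of_mem _ hz)) hl'nenil
          have hprodeq : (x :: l').prod = x * l'.prod := by simp
          have hgprod : (x :: l').prod ∈ Subgroup.closure (S : Set (La F G)) := by
            rw [hprodeq]; exact mul_mem hgx hgl'
          refine ⟨hgprod, ?_⟩
          have hφsplit : φ ⟨(x :: l').prod, hgprod⟩ = φ ⟨x, hgx⟩ * φ ⟨l'.prod, hgl'⟩ := by
            rw [show (⟨(x :: l').prod, hgprod⟩ : Subgroup.closure (S : Set (La F G)))
              = ⟨x, hgx⟩ * ⟨l'.prod, hgl'⟩ from by ext; simp [hprodeq], map_mul]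
          rcases hEDx with hx1 | ⟨hx1, hx2⟩ <;> rcases hIH with hy1 | ⟨hy1, hy2⟩
          · left; rw [hφsplit]; exact lo_pos_mul loh hx1 hy1
          · left; rw [hφsplit, hy1, mul_one]; exact hx1
          · left; rw [hφsplit, hx1, one_mul]; exact hy1
          · right
            refine ⟨by rw [hφsplit, hx1, hy1, mul_one], ?_⟩
            rw [hprodeq]
            exact (PosIn.single hx2).mul hy2
    rintro ⟨l, hl, hmem, hprod⟩
    obtain ⟨hg1, hcase⟩ := aux l hmem hl
    rcases hcase with hpos | ⟨-, hP0⟩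
    · have : φ ⟨l.prod, hg1⟩ = 1 := by
        rw [show (⟨l.prod, hg1⟩ : Subgroup.closure (S : Set (La F G))) = 1 from by
          ext; simp [hprod], map_one]
      rw [this] at hpos
      exact lo_irrefl loh 1 hpos
    · rw [hprod] at hP0
      exact hε0 hP0

end SignLemma

section Compactness

variable (F : Type u) (G : Type v) [Group F] [Group G]

theorem lo_La {ltL : Lhat F G → Lhat F G → Prop} (loh : IsLeftOrder ltL)
    (hT : Nontrivial (Tgen F G)) :
    ∃ lt : La F G → La F G → Prop, IsLeftOrder lt := by
  classical
  have hsign : ∀ S : Finset (La F G),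
      ∃ ε, ¬ PosIn (signedOf ε '' ((S.erase 1) : Set (La F G))) 1 :=
    fun S => sign_lemma F G loh hT (S.erase 1).card (S.erase 1) le_rfl
      (Finset.notMem_erase _ _)
  choose εf hεf using hsign
  haveI : (Filter.atTop : Filter (Finset (La F G))).NeBot := Filter.atTop_neBot
  set U : Ultrafilter (Finset (La F G)) := Ultrafilter.of Filter.atTop with hUdef
  have hUle : (U : Filter (Finset (La F G))) ≤ Filter.atTop := Ultrafilter.of_le _
  set σ : La F G → Bool := fun g => decide ({S | εf S g = true} ∈ U) with hσdef
  have hσ : ∀ g, {S | εf S g = σ g} ∈ U := by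
    intro g
    by_cases h : {S | εf S g = true} ∈ U
    · have hg : σ g = true := by rw [hσdef]; simp [h]
      rw [hg]; exact h
    · have hg : σ g = false := by rw [hσdef]; simp [h]
      rw [hg]
      have hcompl := (Ultrafilter.compl_mem_iff_notMem).mpr h
      convert hcompl using 1
      ext S
      simp
  set P : Set (La F G) := {g | PosIn (signedOf σ '' {h : La F G | h ≠ 1}) g} with hPdef
  have h1P : (1 : La F G) ∉ P := by
    rintro ⟨l, hlne, hmem, hprod⟩
    have hsrc : ∀ x ∈ l, ∃ s : La F G, s ≠ 1 ∧ signedOf σ s = x := by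
      intro x hx
      obtain ⟨s, hs, hxs⟩ := hmem x hx
      exact ⟨s, hs, hxs⟩
    choose! src hsrc1 hsrc2 using hsrc
    set sFin : Finset (La F G) := (l.map src).toFinset with hsFin
    have hA1 : {S : Finset (La F G) | sFin ⊆ S} ∈ U :=
      hUle (Filter.Ici_mem_atTop sFin)
    have hA2 : {S : Finset (La F G) | ∀ s ∈ sFin, εf S s = σ s} ∈ U := by
      have he : {S : Finset (La F G) | ∀ s ∈ sFin, εf S s = σ s}
          = ⋂ s ∈ sFin, {S | εf S s = σ s} := by
        ext S; simp
      rw [he]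
      exact (Filter.biInter_finset_mem _).mpr (fun s _ => hσ s)
    obtain ⟨Sstar, hSstar⟩ := Ultrafilter.nonempty_of_mem (Filter.inter_mem hA1 hA2)
    obtain ⟨hS1, hS2⟩ := hSstar
    apply hεf Sstar
    refine ⟨l, hlne, ?_, hprod⟩
    intro x hx
    have hsrcmem : src x ∈ sFin := by
      rw [hsFin, List.mem_toFinset]
      exact List.mem_map.mpr ⟨x, hx, rfl⟩
    refine ⟨src x, ?_, ?_⟩
    · rw [Finset.mem_coe, Finset.mem_erase]
      exact ⟨hsrc1 x hx, hS1 hsrcmem⟩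
    · have hagree : εf Sstar (src x) = σ (src x) := hS2 (src x) hsrcmem
      rw [signedOf, hagree, ← signedOf]
      exact hsrc2 x hx
  have htot : ∀ g : La F G, g ≠ 1 → g ∈ P ∨ g⁻¹ ∈ P := by
    intro g hg
    by_cases hσg : σ g = true
    · left
      exact PosIn.single ⟨g, hg, by rw [signedOf, hσg, if_pos rfl]⟩
    · right
      have hg' : σ g = false := by simpa using hσg
      refine PosIn.single ⟨g, hg, ?_⟩
      rw [signedOf, hg']
      simp
  refine ⟨fun x y => x⁻¹ * y ∈ P, lo_mk ?_ ?_ ?_ ?_⟩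
  · intro x y
    by_cases hxy : x = y
    · exact Or.inr (Or.inl hxy)
    · have hne : x⁻¹ * y ≠ 1 := fun h => hxy (inv_mul_eq_one.mp h)
      rcases htot _ hne with h | h
      · exact Or.inl h
      · right; right
        have he : (x⁻¹ * y)⁻¹ = y⁻¹ * x := by group
        rwa [he] at h
  · intro x
    rw [inv_mul_cancel]
    exact h1P
  · intro x y z hxy hyz
    have he : x⁻¹ * z = (x⁻¹ * y) * (y⁻¹ * z) := by group
    rw [he]
    exact PosIn.mul hxy hyz
  · intro x y z hxy
    have he : (z * x)⁻¹ * (z * y) = x⁻¹ * y := by group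
    rw [he]
    exact hxy

end Compactness

end LOAux

/-- The free product of left-orderable groups is left-orderable. -/
theorem free_product_left_orderable {F G : Type*} [Group F] [Group G]
    (hF : ∃ ltF : F → F → Prop, IsLeftOrder ltF)
    (hG : ∃ ltG : G → G → Prop, IsLeftOrder ltG) :
    ∃ lt : Monoid.Coprod F G → Monoid.Coprod F G → Prop, IsLeftOrder lt := by
  classical
  obtain ⟨ltF, loF⟩ := hF
  obtain ⟨ltG, loG⟩ := hG
  rcases subsingleton_or_nontrivial F with hFs | hFn
  · -- F trivial: Coprod F G embeds in G via snd
    have hcomp : (Monoid.Coprod.inr).comp (Monoid.Coprod.snd)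
        = MonoidHom.id (Monoid.Coprod F G) := by
      apply Monoid.Coprod.hom_ext
      · ext f
        rw [Subsingleton.elim f 1]
        simp
      · ext g
        simp
    have hinj : Function.Injective (Monoid.Coprod.snd : Monoid.Coprod F G →* G) := by
      intro a b hab
      have ha := DFunLike.congr_fun hcomp a
      have hb := DFunLike.congr_fun hcomp b
      simp only [MonoidHom.coe_comp, Function.comp_apply, MonoidHom.id_apply] at ha hb
      rw [← ha, ← hb, hab]
    exact ⟨_, LOAux.lo_comap loG _ hinj⟩
  rcases subsingleton_or_nontrivial G with hGs | hGn
  · -- G trivial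
    have hcomp : (Monoid.Coprod.inl).comp (Monoid.Coprod.fst)
        = MonoidHom.id (Monoid.Coprod F G) := by
      apply Monoid.Coprod.hom_ext
      · ext f
        simp
      · ext g
        rw [Subsingleton.elim g 1]
        simp
    have hinj : Function.Injective (Monoid.Coprod.fst : Monoid.Coprod F G →* F) := by
      intro a b hab
      have ha := DFunLike.congr_fun hcomp a
      have hb := DFunLike.congr_fun hcomp b
      simp only [MonoidHom.coe_comp, Function.comp_apply, MonoidHom.id_apply] at ha hb
      rw [← ha, ← hb, hab]
    exact ⟨_, LOAux.lo_comap loF _ hinj⟩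
  · -- main case
    have loF' : IsLeftOrder (fun a b : ULift F =>
        ltF (MulEquiv.ulift.toMonoidHom a) (MulEquiv.ulift.toMonoidHom b)) :=
      LOAux.lo_comap loF (MulEquiv.ulift.toMonoidHom) (fun a b h => MulEquiv.ulift.injective (by simpa using h))
    have loG' : IsLeftOrder (fun a b : ULift G =>
        ltG (MulEquiv.ulift.toMonoidHom a) (MulEquiv.ulift.toMonoidHom b)) :=
      LOAux.lo_comap loG (MulEquiv.ulift.toMonoidHom) (fun a b h => MulEquiv.ulift.injective (by simpa using h))
    have hT : Nontrivial (LOAux.Tgen F G) := by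
      obtain ⟨x, hx⟩ := exists_ne (1 : F)
      obtain ⟨y, hy⟩ := exists_ne (1 : G)
      have hx' : (ULift.up x : ULift F) ≠ 1 := fun h => hx (congrArg ULift.down h)
      have hy' : (ULift.up y : ULift G) ≠ 1 := fun h => hy (congrArg ULift.down h)
      have hxx : (ULift.up x * ULift.up x : ULift F) ≠ 1 := LOAux.lo_sq_ne_one loF' hx'
      have hneq : (ULift.up x : ULift F) ≠ ULift.up x * ULift.up x := by
        intro h
        apply hx'
        have h2 : (ULift.up x : ULift F) * 1 = ULift.up x * ULift.up x := by
          rw [mul_one]; exact h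
        exact (mul_left_cancel h2).symm
      exact ⟨(⟨ULift.up x, hx'⟩, ⟨ULift.up y, hy'⟩),
        (⟨ULift.up x * ULift.up x, hxx⟩, ⟨ULift.up y, hy'⟩),
        fun hcon => hneq (congrArg (fun t => t.1.1) hcon)⟩
    have loh := LOAux.lo_prodLex (LOAux.lo_prodLex loF' loG') LOAux.intLO
    obtain ⟨ltΛ, loΛ⟩ := LOAux.lo_La F G loh hT
    set j : Monoid.Coprod F G →* LOAux.La F G :=
      Monoid.Coprod.lift ((LOAux.ofF F G).comp (MulEquiv.ulift.symm.toMonoidHom))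
        ((LOAux.ofG F G).comp (MulEquiv.ulift.symm.toMonoidHom)) with hj
    set r : LOAux.La F G →* Monoid.Coprod F G :=
      Monoid.CoprodI.lift (fun b => Bool.rec
        (motive := fun b => LOAux.Mfam F G b →* Monoid.Coprod F G)
        ((Monoid.Coprod.inr).comp (MulEquiv.ulift.toMonoidHom))
        ((Monoid.Coprod.inl).comp (MulEquiv.ulift.toMonoidHom)) b) with hr
    have keyF : ∀ x : ULift F, r (LOAux.ofF F G x) = Monoid.Coprod.inl (MulEquiv.ulift x) := by
      intro x
      rw [hr]
      exact Monoid.CoprodI.lift_of _ _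
    have keyG : ∀ x : ULift G, r (LOAux.ofG F G x) = Monoid.Coprod.inr (MulEquiv.ulift x) := by
      intro x
      rw [hr]
      exact Monoid.CoprodI.lift_of _ _
    have hcomp : r.comp j = MonoidHom.id (Monoid.Coprod F G) := by
      apply Monoid.Coprod.hom_ext
      · ext f
        have hji : j (Monoid.Coprod.inl f) = LOAux.ofF F G (MulEquiv.ulift.symm f) := by
          rw [hj, Monoid.Coprod.lift_apply_inl]
          rfl
        simp only [MonoidHom.coe_comp, Function.comp_apply, MonoidHom.id_apply]
        rw [hji, keyF]
        simp
      · ext g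
        have hji : j (Monoid.Coprod.inr g) = LOAux.ofG F G (MulEquiv.ulift.symm g) := by
          rw [hj, Monoid.Coprod.lift_apply_inr]
          rfl
        simp only [MonoidHom.coe_comp, Function.comp_apply, MonoidHom.id_apply]
        rw [hji, keyG]
        simp
    have hjinj : Function.Injective j := by
      intro a b hab
      have ha := DFunLike.congr_fun hcomp a
      have hb := DFunLike.congr_fun hcomp b
      simp only [MonoidHom.coe_comp, Function.comp_apply, MonoidHom.id_apply] at ha hb
      rw [← ha, ← hb, hab]
    exact ⟨_, LOAux.lo_comap loΛ j hjinj⟩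
end

section
/- There is an assignment that to every pair of left-ordered groups (F₀, <₀), (F₁, <₁) associates a left-invariant strict total order ≺ on the free product F₀ * F₁ such that: (1) ≺ extends <₀ and <₁ along the canonical inclusions F₀ → F₀ * F₁ and F₁ → F₀ * F₁; and (2) for all left-ordered groups (G₀, <'₀), (G₁, <'₁) and all order-preserving homomorphisms φ₀ : F₀ → G₀ and φ₁ : F₁ → G₁, the induced homomorphism φ₀ * φ₁ : F₀ * F₁ → G₀ * G₁ is order-preserving with respect to the assigned orderings. -/
universe u

namespace FPO

section LOfacts

variable {G : Type*} [Group G] {lt : G → G → Prop}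

theorem lo_trans (h : IsLeftOrder lt) {a b c : G} (h1 : lt a b) (h2 : lt b c) : lt a c := by
  haveI := h.1
  exact _root_.trans h1 h2

theorem lo_irrefl (h : IsLeftOrder lt) (a : G) : ¬ lt a a := by
  haveI := h.1
  exact irrefl a

theorem lo_tri (h : IsLeftOrder lt) (a b : G) : lt a b ∨ a = b ∨ lt b a := by
  haveI := h.1
  exact trichotomous a b

theorem lo_asymm (h : IsLeftOrder lt) {a b : G} (h1 : lt a b) : ¬ lt b a :=
  fun h2 => lo_irrefl h a (lo_trans h h1 h2)

theorem lo_iff_one (h : IsLeftOrder lt) (x y : G) : lt x y ↔ lt 1 (x⁻¹ * y) := by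
  constructor
  · intro hxy
    have := h.2 x y x⁻¹ hxy
    rwa [inv_mul_cancel] at this
  · intro hxy
    have := h.2 1 (x⁻¹ * y) x hxy
    rwa [mul_one, mul_inv_cancel_left] at this

theorem lo_one_lt_inv (h : IsLeftOrder lt) {a : G} : lt 1 a⁻¹ ↔ lt a 1 := by
  constructor
  · intro h1
    have := h.2 1 a⁻¹ a h1
    rwa [mul_one, mul_inv_cancel] at this
  · intro h1
    have := h.2 a 1 a⁻¹ h1
    rwa [mul_one, inv_mul_cancel] at this

theorem lo_one_lt_mul (h : IsLeftOrder lt) {a b : G} (ha : lt 1 a) (hb : lt 1 b) :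
    lt 1 (a * b) := by
  have := h.2 1 b a hb
  rw [mul_one] at this
  exact lo_trans h ha this

theorem lo_not_both (h : IsLeftOrder lt) {a : G} (ha : lt 1 a) (hb : lt 1 a⁻¹) : False := by
  rw [lo_one_lt_inv h] at hb
  exact lo_irrefl h 1 (lo_trans h ha hb)

/-- Build a left order from a positive cone. -/
theorem isLeftOrder_of_cone (pos : G → Prop)
    (hone : ¬ pos 1)
    (hmul : ∀ a b, pos a → pos b → pos (a * b))
    (htri : ∀ a, a ≠ 1 → pos a ∨ pos a⁻¹)
    (hasymm : ∀ a, pos a → ¬ pos a⁻¹) :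
    IsLeftOrder (fun x y => pos (x⁻¹ * y)) := by
  have htric : ∀ a b : G, pos (a⁻¹ * b) ∨ a = b ∨ pos (b⁻¹ * a) := by
    intro a b
    rcases eq_or_ne a b with rfl | hne
    · exact Or.inr (Or.inl rfl)
    · have : a⁻¹ * b ≠ 1 := by
        intro hh
        exact hne (by rw [← mul_one a, ← hh, mul_inv_cancel_left])
      rcases htri _ this with hp | hp
      · exact Or.inl hp
      · refine Or.inr (Or.inr ?_)
        rwa [mul_inv_rev, inv_inv] at hp
  constructor
  · exact
      { trichotomous := fun a b h1 h2 => by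
          rcases htric a b with h | h | h
          exacts [absurd h h1, h, absurd h h2]
        irrefl := by
          intro a ha
          rw [inv_mul_cancel] at ha
          exact hone ha
        trans := by
          intro a b c h1 h2
          have := hmul _ _ h1 h2
          rwa [mul_assoc, mul_inv_cancel_left] at this }
  · intro x y z hxy
    have : (z * x)⁻¹ * (z * y) = x⁻¹ * y := by group
    rwa [this]

end LOfacts

section PosF

variable {Q : Type u} [Group Q] (lt : Q → Q → Prop)

/-- Positivity of a finitely supported `ℤ`-valued function: the value at the `lt`-least
point of the support is positive. -/
def posF (f : Q →₀ ℤ) : Prop :=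
  ∃ a ∈ f.support, 0 < f a ∧ ∀ b ∈ f.support, b ≠ a → lt a b

variable {lt}

theorem exists_min (h : IsLeftOrder lt) (s : Finset Q) (hs : s.Nonempty) :
    ∃ a ∈ s, ∀ b ∈ s, b ≠ a → lt a b := by
  classical
  induction s using Finset.cons_induction_on with
  | empty => simp at hs
  | @cons x t hx ih =>
    rcases t.eq_empty_or_nonempty with rfl | ht
    · exact ⟨x, by simp, by simp⟩
    · obtain ⟨a, ha, hmin⟩ := ih ht
      rcases lo_tri h x a with hlt | rfl | hlt
      · refine ⟨x, Finset.mem_cons_self x t, ?_⟩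
        intro b hb hbx
        rcases Finset.mem_cons.1 hb with rfl | hbt
        · exact absurd rfl hbx
        · rcases eq_or_ne b a with rfl | hba
          · exact hlt
          · exact lo_trans h hlt (hmin b hbt hba)
      · exact absurd ha hx
      · refine ⟨a, Finset.mem_cons.2 (Or.inr ha), ?_⟩
        intro b hb hba
        rcases Finset.mem_cons.1 hb with rfl | hbt
        · exact hlt
        · exact hmin b hbt hba

theorem posF_not_both (h : IsLeftOrder lt) {f : Q →₀ ℤ} (h1 : posF lt f) (h2 : posF lt (-f)) :
    False := by
  obtain ⟨a, ha, hav, hamin⟩ := h1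
  obtain ⟨b, hb, hbv, hbmin⟩ := h2
  rw [Finsupp.support_neg] at hb
  have hab : a = b := by
    by_contra hne
    exact lo_asymm h (hamin b hb (Ne.symm hne))
      (hbmin a (by rwa [Finsupp.support_neg]) hne)
  subst hab
  rw [Finsupp.neg_apply] at hbv
  omega

theorem posF_total (h : IsLeftOrder lt) {f : Q →₀ ℤ} (hf : f ≠ 0) :
    posF lt f ∨ posF lt (-f) := by
  obtain ⟨a, ha, hmin⟩ := exists_min h f.support (Finsupp.support_nonempty_iff.2 hf)
  have hv : f a ≠ 0 := Finsupp.mem_support_iff.1 ha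
  rcases lt_or_gt_of_ne hv with hneg | hpos
  · right
    refine ⟨a, ?_, ?_, ?_⟩
    · rwa [Finsupp.support_neg]
    · rw [Finsupp.neg_apply]; omega
    · intro b hb hba
      exact hmin b (by rwa [Finsupp.support_neg] at hb) hba
  · exact Or.inl ⟨a, ha, hpos, hmin⟩

theorem posF_add (h : IsLeftOrder lt) {f g : Q →₀ ℤ} (hf : posF lt f) (hg : posF lt g) :
    posF lt (f + g) := by
  classical
  obtain ⟨a, ha, hav, hamin⟩ := hf
  obtain ⟨b, hb, hbv, hbmin⟩ := hg
  -- the min of the two minima works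
  have key : ∀ c : Q, (∀ d ∈ (f + g).support, d ≠ c → lt c d) → 0 < (f + g) c →
      posF lt (f + g) := by
    intro c hmin hval
    exact ⟨c, Finsupp.mem_support_iff.2 (by omega), hval, hmin⟩
  have hsupp : (f + g).support ⊆ f.support ∪ g.support := Finsupp.support_add
  have hfz : ∀ c, c ∉ f.support → f c = 0 := fun c hc => Finsupp.notMem_support_iff.1 hc
  have hgz : ∀ c, c ∉ g.support → g c = 0 := fun c hc => Finsupp.notMem_support_iff.1 hc
  rcases lo_tri h a b with hab | rfl | hba
  · -- a is the min; g a = 0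
    have hga : g a = 0 := by
      by_contra hga
      have : a ∈ g.support := Finsupp.mem_support_iff.2 hga
      rcases eq_or_ne a b with rfl | hne
      · exact lo_irrefl h a hab
      · exact lo_asymm h hab (hbmin a this hne)
    apply key a
    · intro d hd hda
      rcases Finset.mem_union.1 (hsupp hd) with hdf | hdg
      · exact hamin d hdf hda
      · rcases eq_or_ne d b with rfl | hdb
        · exact hab
        · exact lo_trans h hab (hbmin d hdg hdb)
    · rw [Finsupp.add_apply, hga]; omega
  · apply key a
    · intro d hd hda
      rcases Finset.mem_union.1 (hsupp hd) with hdf | hdg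
      · exact hamin d hdf hda
      · exact hbmin d hdg hda
    · rw [Finsupp.add_apply]; omega
  · have hfb : f b = 0 := by
      by_contra hfb
      have : b ∈ f.support := Finsupp.mem_support_iff.2 hfb
      rcases eq_or_ne b a with rfl | hne
      · exact lo_irrefl h b hba
      · exact lo_asymm h hba (hamin b this hne)
    apply key b
    · intro d hd hdb
      rcases Finset.mem_union.1 (hsupp hd) with hdf | hdg
      · rcases eq_or_ne d a with rfl | hda
        · exact hba
        · exact lo_trans h hba (hamin d hdf hda)
      · exact hbmin d hdg hdb
    · rw [Finsupp.add_apply, hfb]; omega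

end PosF

section Step

/-- A bundled group with a relation. -/
structure LO : Type (u + 1) where
  G : Type u
  grp : Group G
  lt : G → G → Prop

attribute [instance] LO.grp

variable (L : LO.{u})

/-- The translation action of `Q` on `Multiplicative (Q →₀ ℤ)`. -/
noncomputable def actQ : L.G →* MulAut (Multiplicative (L.G →₀ ℤ)) where
  toFun q := AddEquiv.toMultiplicative (Finsupp.domCongr (Equiv.mulLeft q))
  map_one' := by
    refine MulEquiv.ext fun f => Multiplicative.toAdd.injective (Finsupp.ext fun x => ?_)
    simp [Finsupp.domCongr_apply, Finsupp.equivMapDomain_apply, Equiv.Perm.one_symm]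
  map_mul' q r := by
    refine MulEquiv.ext fun f => Multiplicative.toAdd.injective (Finsupp.ext fun x => ?_)
    simp [Finsupp.domCongr_apply, Finsupp.equivMapDomain_apply, Equiv.Perm.mul_def,
      mul_assoc]

theorem actQ_apply (q : L.G) (f : Multiplicative (L.G →₀ ℤ)) (x : L.G) :
    Multiplicative.toAdd (actQ L q f) x = Multiplicative.toAdd f (q⁻¹ * x) := by
  simp [actQ, Finsupp.domCongr_apply, Finsupp.equivMapDomain_apply]

theorem actQ_single (q x : L.G) (n : ℤ) :
    (actQ L q (Multiplicative.ofAdd (Finsupp.single x n))) =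
      Multiplicative.ofAdd (Finsupp.single (q * x) n) := by
  simp [actQ, Finsupp.domCongr_apply]

/-- positivity cone on the semidirect product. -/
def stepPos (z : SemidirectProduct (Multiplicative (L.G →₀ ℤ)) L.G (actQ L)) : Prop :=
  L.lt 1 z.right ∨ (z.right = 1 ∧ posF L.lt (Multiplicative.toAdd z.left))

/-- One step of the tower: `ℤ[Q] ⋊ Q` with the lexicographic order. -/
noncomputable def Step : LO.{u} where
  G := SemidirectProduct (Multiplicative (L.G →₀ ℤ)) L.G (actQ L)
  grp := inferInstance
  lt x y := stepPos L (x⁻¹ * y)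

theorem posF_shift (h : IsLeftOrder L.lt) (q : L.G) (f : L.G →₀ ℤ) :
    posF L.lt (Multiplicative.toAdd (actQ L q (Multiplicative.ofAdd f))) ↔ posF L.lt f := by
  classical
  have hval : ∀ x, Multiplicative.toAdd (actQ L q (Multiplicative.ofAdd f)) x = f (q⁻¹ * x) := by
    intro x
    simpa using actQ_apply L q (Multiplicative.ofAdd f) x
  have hsup : (Multiplicative.toAdd (actQ L q (Multiplicative.ofAdd f))).support =
      f.support.image (fun x => q * x) := by
    ext x
    simp only [Finsupp.mem_support_iff, hval, Finset.mem_image]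
    constructor
    · intro hx
      exact ⟨q⁻¹ * x, hx, by simp⟩
    · rintro ⟨y, hy, rfl⟩
      simpa using hy
  constructor
  · rintro ⟨a, ha, hav, hmin⟩
    rw [hsup] at ha hmin
    obtain ⟨a', ha', rfl⟩ := Finset.mem_image.1 ha
    refine ⟨a', ha', ?_, ?_⟩
    · rw [hval] at hav; simpa using hav
    · intro b hb hba
      have := hmin (q * b) (Finset.mem_image.2 ⟨b, hb, rfl⟩) (by simpa using hba)
      have h2 := h.2 _ _ q⁻¹ this
      simpa using h2
  · rintro ⟨a, ha, hav, hmin⟩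
    refine ⟨q * a, by rw [hsup]; exact Finset.mem_image.2 ⟨a, ha, rfl⟩,
      by rw [hval]; simpa using hav, ?_⟩
    intro b hb hba
    rw [hsup] at hb
    obtain ⟨b', hb', rfl⟩ := Finset.mem_image.1 hb
    exact h.2 _ _ q (hmin b' hb' (fun hh => hba (by rw [hh])))

variable {L}

theorem stepPos_one (h : IsLeftOrder L.lt) : ¬ stepPos L 1 := by
  rintro (h1 | ⟨-, h1⟩)
  · rw [SemidirectProduct.one_right] at h1
    exact lo_irrefl h 1 h1
  · rw [SemidirectProduct.one_left] at h1
    obtain ⟨a, ha, -, -⟩ := h1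
    simp at ha

theorem stepPos_mul (h : IsLeftOrder L.lt) {z w : (Step L).G}
    (hz : stepPos L z) (hw : stepPos L w) : stepPos L (z * w) := by
  have hr : (z * w).right = z.right * w.right := rfl
  rcases hz with hz | ⟨hz1, hz2⟩ <;> rcases hw with hw | ⟨hw1, hw2⟩
  · exact Or.inl (by rw [hr]; exact lo_one_lt_mul h hz hw)
  · exact Or.inl (by rw [hr, hw1, mul_one]; exact hz)
  · exact Or.inl (by rw [hr, hz1, one_mul]; exact hw)
  · refine Or.inr ⟨by rw [hr, hz1, hw1, mul_one], ?_⟩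
    have hl : (z * w).left = z.left * actQ L z.right w.left := rfl
    rw [hl, hz1, map_one, MulAut.one_apply, toAdd_mul]
    exact posF_add h hz2 hw2

theorem stepPos_total (h : IsLeftOrder L.lt) {z : (Step L).G} (hz : z ≠ 1) :
    stepPos L z ∨ stepPos L z⁻¹ := by
  rcases eq_or_ne z.right 1 with hr | hr
  · have hl : z.left ≠ 1 := by
      intro hl
      exact hz (SemidirectProduct.ext hl hr)
    have hf : Multiplicative.toAdd z.left ≠ 0 := by
      intro hf
      exact hl (Multiplicative.toAdd.injective hf)
    rcases posF_total h hf with hp | hp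
    · exact Or.inl (Or.inr ⟨hr, hp⟩)
    · refine Or.inr (Or.inr ⟨by erw [SemidirectProduct.inv_right, hr, inv_one], ?_⟩)
      erw [SemidirectProduct.inv_left, hr, inv_one, map_one, MulAut.one_apply, toAdd_inv (α := L.G →₀ ℤ)]
      exact hp
  · rcases lo_tri h 1 z.right with h1 | h1 | h1
    · exact Or.inl (Or.inl h1)
    · exact absurd h1.symm hr
    · refine Or.inr (Or.inl ?_)
      erw [SemidirectProduct.inv_right]
      exact (lo_one_lt_inv h).2 h1

theorem stepPos_not_both (h : IsLeftOrder L.lt) {z : (Step L).G}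
    (h1 : stepPos L z) (h2 : stepPos L z⁻¹) : False := by
  rcases h1 with h1 | ⟨h1, h1'⟩ <;> rcases h2 with h2 | ⟨h2, h2'⟩
  · erw [SemidirectProduct.inv_right] at h2
    exact lo_not_both h h1 h2
  · erw [SemidirectProduct.inv_right, inv_eq_one] at h2
    rw [h2] at h1
    exact lo_irrefl h 1 h1
  · erw [SemidirectProduct.inv_right, h1, inv_one] at h2
    exact lo_irrefl h 1 h2
  · erw [SemidirectProduct.inv_left, h1, inv_one, map_one, MulAut.one_apply, toAdd_inv (α := L.G →₀ ℤ)] at h2'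
    exact posF_not_both h h1' h2'

theorem step_isLeftOrder (h : IsLeftOrder L.lt) : IsLeftOrder (Step L).lt := by
  have := isLeftOrder_of_cone (G := (Step L).G) (stepPos L) (stepPos_one h)
    (fun a b ha hb => stepPos_mul h ha hb) (fun a ha => stepPos_total h ha)
    (fun a ha hb => stepPos_not_both h ha hb)
  exact this

end Step

section Tower

open Monoid

variable (F₀ F₁ : Type u) [Group F₀] [Group F₁]
variable (lt₀ : F₀ → F₀ → Prop) (lt₁ : F₁ → F₁ → Prop)

/-- The base of the tower: `F₀ × F₁` with the lexicographic order. -/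
def L0 : LO.{u} where
  G := F₀ × F₁
  grp := inferInstance
  lt p q := lt₀ p.1 q.1 ∨ (p.1 = q.1 ∧ lt₁ p.2 q.2)

theorem L0_isLeftOrder (h₀ : IsLeftOrder lt₀) (h₁ : IsLeftOrder lt₁) :
    IsLeftOrder (L0 F₀ F₁ lt₀ lt₁).lt := by
  constructor
  · exact
      { trichotomous := by
          rintro ⟨a, b⟩ ⟨c, d⟩ hn1 hn2
          refine (fun (H : _ ∨ (a, b) = (c, d) ∨ _) => H.elim (fun h => absurd h hn1)
            (fun h => h.elim id (fun h => absurd h hn2))) ?_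
          rcases lo_tri h₀ a c with h | rfl | h
          · exact Or.inl (Or.inl h)
          · rcases lo_tri h₁ b d with h | rfl | h
            · exact Or.inl (Or.inr ⟨rfl, h⟩)
            · exact Or.inr (Or.inl rfl)
            · exact Or.inr (Or.inr (Or.inr ⟨rfl, h⟩))
          · exact Or.inr (Or.inr (Or.inl h))
        irrefl := by
          rintro ⟨a, b⟩ (h | ⟨-, h⟩)
          · exact lo_irrefl h₀ a h
          · exact lo_irrefl h₁ b h
        trans := by
          rintro ⟨a, b⟩ ⟨c, d⟩ ⟨e, f⟩ (h1 | ⟨hac, h1⟩) (h2 | ⟨hce, h2⟩)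
          · exact Or.inl (lo_trans h₀ h1 h2)
          · exact Or.inl (hce ▸ h1)
          · exact Or.inl (hac ▸ h2)
          · exact Or.inr ⟨hac.trans hce, lo_trans h₁ h1 h2⟩ }
  · rintro ⟨a, b⟩ ⟨c, d⟩ ⟨e, f⟩ (h | ⟨rfl, h⟩)
    · exact Or.inl (h₀.2 _ _ e h)
    · exact Or.inr ⟨rfl, h₁.2 _ _ f h⟩

/-- The tower of left-ordered groups. -/
noncomputable def towerL : ℕ → LO.{u}
  | 0 => L0 F₀ F₁ lt₀ lt₁
  | n + 1 => Step (towerL n)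

/-- The cocycle building-block `[x] - [1]`. -/
noncomputable def dd (L : LO.{u}) (x : L.G) : L.G →₀ ℤ :=
  Finsupp.single x 1 - Finsupp.single 1 1

/-- Lift a homomorphism into `L` to the Fox-derivative homomorphism into `Step L`. -/
noncomputable def liftFac {H : Type*} [Group H] (L : LO.{u}) (u : H →* L.G) :
    H →* (Step L).G where
  toFun h := ⟨Multiplicative.ofAdd (dd L (u h)), u h⟩
  map_one' := by
    refine SemidirectProduct.ext ?_ ?_ <;> simp [dd] <;> rfl
  map_mul' h h' := by
    refine SemidirectProduct.ext ?_ ?_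
    · show Multiplicative.ofAdd (dd L (u (h * h'))) =
        Multiplicative.ofAdd (dd L (u h)) * actQ L (u h) (Multiplicative.ofAdd (dd L (u h')))
      have : actQ L (u h) (Multiplicative.ofAdd (dd L (u h'))) =
          Multiplicative.ofAdd (Finsupp.single (u h * u h') 1 - Finsupp.single (u h) 1) := by
        apply Multiplicative.toAdd.injective
        show (Finsupp.domCongr (Equiv.mulLeft (u h)) : (L.G →₀ ℤ) ≃+ (L.G →₀ ℤ)) (dd L (u h')) = _
        rw [dd, map_sub]
        simp [Finsupp.domCongr_apply]
      rw [this, ← ofAdd_add]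
      congr 1
      rw [dd, dd, map_mul]
      abel
    · show u (h * h') = u h * u h'
      exact map_mul u h h'

/-- The tower of Fox-derivative homomorphisms. -/
noncomputable def towerHom : ∀ n : ℕ, Coprod F₀ F₁ →* (towerL F₀ F₁ lt₀ lt₁ n).G
  | 0 => Coprod.lift (MonoidHom.inl F₀ F₁) (MonoidHom.inr F₀ F₁)
  | n + 1 =>
      Coprod.lift
        (liftFac (towerL F₀ F₁ lt₀ lt₁ n) ((towerHom n).comp Coprod.inl))
        (SemidirectProduct.inr.comp ((towerHom n).comp Coprod.inr))

theorem tower_right (n : ℕ) (g : Coprod F₀ F₁) :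
    (towerHom F₀ F₁ lt₀ lt₁ (n + 1) g).right = towerHom F₀ F₁ lt₀ lt₁ n g := by
  have : (SemidirectProduct.rightHom.comp (towerHom F₀ F₁ lt₀ lt₁ (n + 1))) =
      towerHom F₀ F₁ lt₀ lt₁ n := by
    apply Coprod.hom_ext <;> ext x <;> rfl
  exact DFunLike.congr_fun this g

theorem tower_chain {n : ℕ} {g : Coprod F₀ F₁}
    (hg : towerHom F₀ F₁ lt₀ lt₁ (n + 1) g = 1) : towerHom F₀ F₁ lt₀ lt₁ n g = 1 := by
  erw [← tower_right, hg, SemidirectProduct.one_right]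

end Tower

section Words

open Monoid

variable {F₀ F₁ : Type u} [Group F₀] [Group F₁]

/-- The letter map. -/
def letter : F₀ ⊕ F₁ → Coprod F₀ F₁ := Sum.elim (fun a => Coprod.inl a) (fun b => Coprod.inr b)

/-- Product of a word. -/
def prodOf (l : List (F₀ ⊕ F₁)) : Coprod F₀ F₁ := (l.map letter).prod

/-- Reduced words: no identity letters, alternating. -/
def Red (l : List (F₀ ⊕ F₁)) : Prop :=
  (∀ s ∈ l, s ≠ Sum.inl 1 ∧ s ≠ Sum.inr 1) ∧ l.Chain' (fun x y => x.isLeft ≠ y.isLeft)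

theorem prodOf_nil : prodOf ([] : List (F₀ ⊕ F₁)) = 1 := rfl

theorem prodOf_cons (s : F₀ ⊕ F₁) (t : List (F₀ ⊕ F₁)) :
    prodOf (s :: t) = letter s * prodOf t := by
  simp [prodOf]

theorem red_tail {s : F₀ ⊕ F₁} {t : List (F₀ ⊕ F₁)} (h : Red (s :: t)) : Red t :=
  ⟨fun x hx => h.1 x (List.mem_cons_of_mem s hx), h.2.tail⟩

theorem red_take {l : List (F₀ ⊕ F₁)} (h : Red l) (k : ℕ) : Red (l.take k) :=
  ⟨fun x hx => h.1 x (List.take_subset k l hx), h.2.prefix (List.take_prefix k l)⟩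

theorem red_single {s : F₀ ⊕ F₁} {t : List (F₀ ⊕ F₁)} (h : Red (s :: t)) : Red [s] :=
  ⟨fun x hx => by rw [List.mem_singleton] at hx; exact hx ▸ h.1 s List.mem_cons_self,
    List.isChain_singleton s⟩

theorem exists_red (g : Coprod F₀ F₁) : ∃ l, Red l ∧ prodOf l = g := by
  have cons_red : ∀ (s : F₀ ⊕ F₁) (l : List (F₀ ⊕ F₁)), Red l →
      ∃ l', Red l' ∧ prodOf l' = letter s * prodOf l := by
    intro s l hl
    have hone : ∀ (s' : F₀ ⊕ F₁), (s' = Sum.inl (1 : F₀) ∨ s' = Sum.inr (1 : F₁)) →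
        letter s' = 1 := by
      rintro s' (rfl | rfl) <;> simp [letter]
    by_cases hs : s = Sum.inl (1 : F₀) ∨ s = Sum.inr (1 : F₁)
    · exact ⟨l, hl, by rw [hone s hs, one_mul]⟩
    · push_neg at hs
      match l with
      | [] => exact ⟨[s], ⟨fun x hx => by rw [List.mem_singleton] at hx; exact hx ▸ hs,
          List.isChain_singleton s⟩, by simp [prodOf_cons]⟩
      | s' :: t =>
        rcases s with a | b
        · rcases s' with a' | b'
          · -- both inl : merge
            by_cases hmul : a * a' = 1
            · refine ⟨t, red_tail hl, ?_⟩
              rw [prodOf_cons, ← mul_assoc]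
              show prodOf t = Coprod.inl a * Coprod.inl a' * prodOf t
              rw [← map_mul, hmul, map_one, one_mul]
            · refine ⟨Sum.inl (a * a') :: t, ?_, ?_⟩
              · constructor
                · rintro x hx
                  rcases List.mem_cons.1 hx with rfl | hx
                  · exact ⟨by simpa using hmul, by simp⟩
                  · exact (red_tail hl).1 x hx
                · have := hl.2
                  unfold List.Chain' at this ⊢
                  rw [List.isChain_cons] at this ⊢
                  exact ⟨fun y hy => this.1 y hy, this.2⟩
              · simp only [prodOf_cons, letter, Sum.elim_inl, map_mul, mul_assoc]
          · -- inl then inr: prepend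
            refine ⟨Sum.inl a :: Sum.inr b' :: t, ?_, by rw [prodOf_cons]⟩
            constructor
            · rintro x hx
              rcases List.mem_cons.1 hx with rfl | hx
              · exact hs
              · exact hl.1 x hx
            · exact List.IsChain.cons_cons (by simp) hl.2
        · rcases s' with a' | b'
          · refine ⟨Sum.inr b :: Sum.inl a' :: t, ?_, by rw [prodOf_cons]⟩
            constructor
            · rintro x hx
              rcases List.mem_cons.1 hx with rfl | hx
              · exact hs
              · exact hl.1 x hx
            · exact List.IsChain.cons_cons (by simp) hl.2
          · by_cases hmul : b * b' = 1
            · refine ⟨t, red_tail hl, ?_⟩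
              rw [prodOf_cons, ← mul_assoc]
              show prodOf t = Coprod.inr b * Coprod.inr b' * prodOf t
              rw [← map_mul, hmul, map_one, one_mul]
            · refine ⟨Sum.inr (b * b') :: t, ?_, ?_⟩
              · constructor
                · rintro x hx
                  rcases List.mem_cons.1 hx with rfl | hx
                  · exact ⟨by simp, by simpa using hmul⟩
                  · exact (red_tail hl).1 x hx
                · have := hl.2
                  unfold List.Chain' at this ⊢
                  rw [List.isChain_cons] at this ⊢
                  exact ⟨fun y hy => this.1 y hy, this.2⟩
              · simp only [prodOf_cons, letter, Sum.elim_inr, map_mul, mul_assoc]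
  induction g using Coprod.induction_on' with
  | one => exact ⟨[], ⟨by simp, List.isChain_nil⟩, rfl⟩
  | inl_mul m x ih =>
    obtain ⟨l, hl, rfl⟩ := ih
    simpa [letter] using cons_red (Sum.inl m) l hl
  | inr_mul m x ih =>
    obtain ⟨l, hl, rfl⟩ := ih
    simpa [letter] using cons_red (Sum.inr m) l hl

end Words

section Key

open Monoid

variable (F₀ F₁ : Type u) [Group F₀] [Group F₁]
variable (lt₀ : F₀ → F₀ → Prop) (lt₁ : F₁ → F₁ → Prop)

theorem prodOf_single (s : F₀ ⊕ F₁) : prodOf [s] = letter s := by simp [prodOf]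

theorem thom_inl (n : ℕ) (a : F₀) :
    towerHom F₀ F₁ lt₀ lt₁ (n + 1) (Coprod.inl a) =
      (⟨Multiplicative.ofAdd (dd (towerL F₀ F₁ lt₀ lt₁ n)
          (towerHom F₀ F₁ lt₀ lt₁ n (Coprod.inl a))),
        towerHom F₀ F₁ lt₀ lt₁ n (Coprod.inl a)⟩ :
        SemidirectProduct _ _ (actQ (towerL F₀ F₁ lt₀ lt₁ n))) := by
  show Coprod.lift _ _ (Coprod.inl a) = _
  erw [Coprod.lift_apply_inl]
  rfl

theorem thom_inr (n : ℕ) (b : F₁) :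
    towerHom F₀ F₁ lt₀ lt₁ (n + 1) (Coprod.inr b) =
      (⟨1, towerHom F₀ F₁ lt₀ lt₁ n (Coprod.inr b)⟩ :
        SemidirectProduct _ _ (actQ (towerL F₀ F₁ lt₀ lt₁ n))) := by
  show Coprod.lift _ _ (Coprod.inr b) = _
  erw [Coprod.lift_apply_inr]
  rfl

theorem left_mul_apply (n : ℕ)
    (z w : SemidirectProduct (Multiplicative ((towerL F₀ F₁ lt₀ lt₁ n).G →₀ ℤ))
      (towerL F₀ F₁ lt₀ lt₁ n).G (actQ (towerL F₀ F₁ lt₀ lt₁ n)))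
    (x : (towerL F₀ F₁ lt₀ lt₁ n).G) :
    Multiplicative.toAdd (z * w).left x =
      Multiplicative.toAdd z.left x + Multiplicative.toAdd w.left (z.right⁻¹ * x) := by
  rw [SemidirectProduct.mul_left, toAdd_mul, Finsupp.add_apply, actQ_apply]

theorem Zlem (n : ℕ) (t : List (F₀ ⊕ F₁)) :
    ∀ (x : (towerL F₀ F₁ lt₀ lt₁ n).G),
    (∀ k, k ≤ t.length → towerHom F₀ F₁ lt₀ lt₁ n (prodOf (t.take k)) ≠ x) →
    Multiplicative.toAdd (towerHom F₀ F₁ lt₀ lt₁ (n + 1) (prodOf t)).left x = 0 := by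
  classical
  induction t with
  | nil =>
    intro x _
    rw [prodOf_nil, map_one]
    rfl
  | cons s t ih =>
    intro x hx
    erw [prodOf_cons, map_mul, left_mul_apply]
    have hright : (towerHom F₀ F₁ lt₀ lt₁ (n + 1) (letter s)).right =
        towerHom F₀ F₁ lt₀ lt₁ n (letter s) := tower_right F₀ F₁ lt₀ lt₁ n _
    have hterm2 : Multiplicative.toAdd (towerHom F₀ F₁ lt₀ lt₁ (n + 1) (prodOf t)).left
        ((towerHom F₀ F₁ lt₀ lt₁ (n + 1) (letter s)).right⁻¹ * x) = 0 := by
      rw [hright]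
      apply ih
      intro k hk hcontra
      apply hx (k + 1) (by simpa using hk)
      rw [List.take_succ_cons, prodOf_cons, map_mul, hcontra]
      rw [mul_inv_cancel_left]
    rw [hterm2, add_zero]
    rcases s with a | b
    · rw [show letter (Sum.inl a) = (Coprod.inl a : Coprod F₀ F₁) from rfl, thom_inl]
      show (dd (towerL F₀ F₁ lt₀ lt₁ n) (towerHom F₀ F₁ lt₀ lt₁ n (Coprod.inl a))) x = 0
      have hx1 : x ≠ towerHom F₀ F₁ lt₀ lt₁ n (Coprod.inl a) := by
        intro hh
        exact hx 1 (by simp) (by rw [List.take_succ_cons, List.take_zero, prodOf_single]; exact hh.symm)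
      have hx0 : x ≠ 1 := by
        intro hh
        exact hx 0 (by simp) (by rw [List.take_zero, prodOf_nil, map_one]; exact hh.symm)
      rw [dd, Finsupp.sub_apply, Finsupp.single_apply, Finsupp.single_apply,
        if_neg (fun hh => hx1 hh.symm), if_neg (fun hh => hx0 hh.symm)]
      ring
    · rw [show letter (Sum.inr b) = (Coprod.inr b : Coprod F₀ F₁) from rfl, thom_inr]
      rfl

theorem key : ∀ (n : ℕ) (l : List (F₀ ⊕ F₁)), Red l → l ≠ [] → l.length ≤ n + 1 →
    towerHom F₀ F₁ lt₀ lt₁ n (prodOf l) ≠ 1 := by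
  classical
  intro n
  induction n with
  | zero =>
    rintro (_ | ⟨s, (_ | ⟨s', t⟩)⟩) hred hne hlen
    · exact absurd rfl hne
    · rcases s with a | b
      · have ha : a ≠ 1 := by
          have := (hred.1 _ (List.mem_singleton_self _)).1
          simpa using this
        rw [prodOf_single]
        show Coprod.lift (MonoidHom.inl F₀ F₁) (MonoidHom.inr F₀ F₁) (Coprod.inl a) ≠ 1
        rw [Coprod.lift_apply_inl]
        intro hh
        exact ha (congrArg Prod.fst hh)
      · have hb : b ≠ 1 := by
          have := (hred.1 _ (List.mem_singleton_self _)).2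
          simpa using this
        rw [prodOf_single]
        show Coprod.lift (MonoidHom.inl F₀ F₁) (MonoidHom.inr F₀ F₁) (Coprod.inr b) ≠ 1
        rw [Coprod.lift_apply_inr]
        intro hh
        exact hb (congrArg Prod.snd hh)
    · simp at hlen
  | succ n ih =>
    intro l hred hne hlen h1
    by_cases hsh : l.length ≤ n + 1
    · exact ih l hred hne hsh (tower_chain F₀ F₁ lt₀ lt₁ h1)
    · match l, hne with
      | [s], _ => simp at hsh
      | s₁ :: s₂ :: t, _ =>
        have hlen2 : t.length = n := by
          simp only [List.length_cons] at hlen hsh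
          omega
        -- the single-letter and two-letter prefixes are nontrivial
        have hkey1 : ∀ s ∈ s₁ :: s₂ :: t, towerHom F₀ F₁ lt₀ lt₁ n (letter s) ≠ 1 := by
          intro s hs
          rw [← prodOf_single]
          refine ih [s] ⟨fun x hx => by rw [List.mem_singleton] at hx; exact hx ▸ hred.1 s hs,
            List.isChain_singleton s⟩ (by simp) (by simp)
        set x₁ := towerHom F₀ F₁ lt₀ lt₁ n (letter s₁) with hx₁
        have hcf : Multiplicative.toAdd (towerHom F₀ F₁ lt₀ lt₁ (n + 1) (prodOf (s₁ :: s₂ :: t))).left x₁ = 0 := by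
          rw [h1]; rfl
        erw [prodOf_cons, map_mul, left_mul_apply] at hcf
        have hright1 : (towerHom F₀ F₁ lt₀ lt₁ (n + 1) (letter s₁)).right = x₁ :=
          tower_right F₀ F₁ lt₀ lt₁ n _
        rw [hright1, inv_mul_cancel] at hcf
        erw [prodOf_cons, map_mul, left_mul_apply] at hcf
        have hright2 : (towerHom F₀ F₁ lt₀ lt₁ (n + 1) (letter s₂)).right =
            towerHom F₀ F₁ lt₀ lt₁ n (letter s₂) := tower_right F₀ F₁ lt₀ lt₁ n _
        have hz : Multiplicative.toAdd (towerHom F₀ F₁ lt₀ lt₁ (n + 1) (prodOf t)).left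
            ((towerHom F₀ F₁ lt₀ lt₁ (n + 1) (letter s₂)).right⁻¹ * 1) = 0 := by
          rw [hright2]
          apply Zlem
          intro k hk hcontra
          have : towerHom F₀ F₁ lt₀ lt₁ n (prodOf ((s₂ :: t).take (k + 1))) = 1 := by
            rw [List.take_succ_cons, prodOf_cons, map_mul, hcontra, mul_one,
              mul_inv_cancel]
          refine ih ((s₂ :: t).take (k + 1)) (red_take (red_tail hred) _) (by simp) ?_ this
          simp only [List.length_take, List.length_cons]
          omega
        rw [hz, add_zero] at hcf
        -- now compute the two dd-terms
        have halt : s₁.isLeft ≠ s₂.isLeft := by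
          have := hred.2
          unfold List.Chain' at this
          rw [List.isChain_cons_cons] at this
          exact this.1
        rcases s₁ with a | b <;> rcases s₂ with a' | b'
        · simp at halt
        · -- s₁ = inl a, s₂ = inr b'
          rw [show letter (Sum.inl a) = (Coprod.inl a : Coprod F₀ F₁) from rfl, thom_inl] at hcf
          rw [show letter (Sum.inr b') = (Coprod.inr b' : Coprod F₀ F₁) from rfl, thom_inr] at hcf
          have h2 : Multiplicative.toAdd
              ((⟨1, towerHom F₀ F₁ lt₀ lt₁ n (Coprod.inr b')⟩ :
                SemidirectProduct _ _ (actQ (towerL F₀ F₁ lt₀ lt₁ n))).left) 1 = (0 : ℤ) := rfl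
          rw [h2, add_zero] at hcf
          have h3 : Multiplicative.toAdd
              ((⟨Multiplicative.ofAdd (dd (towerL F₀ F₁ lt₀ lt₁ n) x₁), x₁⟩ :
                SemidirectProduct _ _ (actQ (towerL F₀ F₁ lt₀ lt₁ n))).left) x₁ = (1 : ℤ) := by
            show dd (towerL F₀ F₁ lt₀ lt₁ n) x₁ x₁ = 1
            have hne1 : ¬ (1 : (towerL F₀ F₁ lt₀ lt₁ n).G) = x₁ := fun hh =>
              hkey1 (Sum.inl a) (by simp) hh.symm
            rw [dd, Finsupp.sub_apply, Finsupp.single_apply, if_pos rfl, Finsupp.single_apply,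
              if_neg hne1]
            ring
          rw [show towerHom F₀ F₁ lt₀ lt₁ n (Coprod.inl a) = x₁ from rfl] at hcf
          rw [h3] at hcf
          omega
        · -- s₁ = inr b, s₂ = inl a'
          rw [show letter (Sum.inr b) = (Coprod.inr b : Coprod F₀ F₁) from rfl, thom_inr] at hcf
          rw [show letter (Sum.inl a') = (Coprod.inl a' : Coprod F₀ F₁) from rfl, thom_inl] at hcf
          have h2 : Multiplicative.toAdd
              ((⟨1, towerHom F₀ F₁ lt₀ lt₁ n (Coprod.inr b)⟩ :
                SemidirectProduct _ _ (actQ (towerL F₀ F₁ lt₀ lt₁ n))).left) x₁ = (0 : ℤ) := rfl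
          rw [h2, zero_add] at hcf
          have h3 : Multiplicative.toAdd
              ((⟨Multiplicative.ofAdd (dd (towerL F₀ F₁ lt₀ lt₁ n)
                  (towerHom F₀ F₁ lt₀ lt₁ n (Coprod.inl a'))),
                towerHom F₀ F₁ lt₀ lt₁ n (Coprod.inl a')⟩ :
                SemidirectProduct _ _ (actQ (towerL F₀ F₁ lt₀ lt₁ n))).left) 1 = (-1 : ℤ) := by
            show dd (towerL F₀ F₁ lt₀ lt₁ n) (towerHom F₀ F₁ lt₀ lt₁ n (Coprod.inl a')) 1 = -1
            have hne1 : ¬ towerHom F₀ F₁ lt₀ lt₁ n (Coprod.inl a') = 1 := fun hh =>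
              hkey1 (Sum.inl a') (by simp) hh
            rw [dd, Finsupp.sub_apply, Finsupp.single_apply, if_neg hne1, Finsupp.single_apply,
              if_pos rfl]
            ring
          rw [h3] at hcf
          omega
        · simp at halt

theorem escape {g : Coprod F₀ F₁} (hg : g ≠ 1) :
    ∃ n, towerHom F₀ F₁ lt₀ lt₁ n g ≠ 1 := by
  obtain ⟨l, hred, rfl⟩ := exists_red g
  rcases l with - | ⟨s, t⟩
  · exact absurd rfl hg
  · exact ⟨(s :: t).length - 1, key F₀ F₁ lt₀ lt₁ _ _ hred (by simp) (by simp)⟩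

end Key

section Cone

open Monoid

variable (F₀ F₁ : Type u) [Group F₀] [Group F₁]
variable (lt₀ : F₀ → F₀ → Prop) (lt₁ : F₁ → F₁ → Prop)

theorem tower_isLeftOrder (h₀ : IsLeftOrder lt₀) (h₁ : IsLeftOrder lt₁) :
    ∀ n, IsLeftOrder (towerL F₀ F₁ lt₀ lt₁ n).lt
  | 0 => L0_isLeftOrder F₀ F₁ lt₀ lt₁ h₀ h₁
  | n + 1 => step_isLeftOrder (tower_isLeftOrder h₀ h₁ n)

theorem tower_chain_le {m n : ℕ} (h : m ≤ n) {g : Coprod F₀ F₁}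
    (hg : towerHom F₀ F₁ lt₀ lt₁ n g = 1) : towerHom F₀ F₁ lt₀ lt₁ m g = 1 := by
  induction n with
  | zero => rwa [Nat.le_zero.1 h]
  | succ n ih =>
    rcases Nat.lt_or_ge m (n + 1) with h2 | h2
    · exact ih (Nat.lt_succ_iff.1 h2) (tower_chain F₀ F₁ lt₀ lt₁ hg)
    · rwa [le_antisymm h h2]

/-- The positive cone on the coproduct. -/
def posC (g : Coprod F₀ F₁) : Prop :=
  ∃ n, (∀ m, m < n → towerHom F₀ F₁ lt₀ lt₁ m g = 1) ∧
    towerHom F₀ F₁ lt₀ lt₁ n g ≠ 1 ∧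
    (towerL F₀ F₁ lt₀ lt₁ n).lt 1 (towerHom F₀ F₁ lt₀ lt₁ n g)

variable {F₀ F₁ lt₀ lt₁}

theorem posC_one : ¬ posC F₀ F₁ lt₀ lt₁ 1 := by
  rintro ⟨n, -, h2, -⟩
  exact h2 (map_one _)

theorem posC_mul (h₀ : IsLeftOrder lt₀) (h₁ : IsLeftOrder lt₁) {g h : Coprod F₀ F₁} (hg : posC F₀ F₁ lt₀ lt₁ g) (hh : posC F₀ F₁ lt₀ lt₁ h) :
    posC F₀ F₁ lt₀ lt₁ (g * h) := by
  obtain ⟨n, hn1, hn2, hn3⟩ := hg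
  obtain ⟨k, hk1, hk2, hk3⟩ := hh
  rcases lt_trichotomy n k with hnk | rfl | hnk
  · refine ⟨n, ?_, ?_, ?_⟩
    · intro m hm
      rw [map_mul, hn1 m hm, hk1 m (hm.trans hnk), one_mul]
    · rw [map_mul, hk1 n hnk, mul_one]
      exact hn2
    · rw [map_mul, hk1 n hnk, mul_one]
      exact hn3
  · have hord := tower_isLeftOrder F₀ F₁ lt₀ lt₁ h₀ h₁ n
    refine ⟨n, ?_, ?_, ?_⟩
    · intro m hm
      rw [map_mul, hn1 m hm, hk1 m hm, one_mul]
    · rw [map_mul]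
      intro hcontra
      exact lo_irrefl hord 1 (hcontra ▸ lo_one_lt_mul hord hn3 hk3)
    · rw [map_mul]
      exact lo_one_lt_mul hord hn3 hk3
  · refine ⟨k, ?_, ?_, ?_⟩
    · intro m hm
      rw [map_mul, hn1 m (hm.trans hnk), hk1 m hm, one_mul]
    · rw [map_mul, hn1 k hnk, one_mul]
      exact hk2
    · rw [map_mul, hn1 k hnk, one_mul]
      exact hk3

theorem posC_total (h₀ : IsLeftOrder lt₀) (h₁ : IsLeftOrder lt₁) {g : Coprod F₀ F₁} (hg : g ≠ 1) :
    posC F₀ F₁ lt₀ lt₁ g ∨ posC F₀ F₁ lt₀ lt₁ g⁻¹ := by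
  classical
  have hex : ∃ n, towerHom F₀ F₁ lt₀ lt₁ n g ≠ 1 := escape F₀ F₁ lt₀ lt₁ hg
  let n := Nat.find hex
  have hn : towerHom F₀ F₁ lt₀ lt₁ n g ≠ 1 := Nat.find_spec hex
  have hmin : ∀ m, m < n → towerHom F₀ F₁ lt₀ lt₁ m g = 1 := fun m hm =>
    not_not.1 (Nat.find_min hex hm)
  have hord := tower_isLeftOrder F₀ F₁ lt₀ lt₁ h₀ h₁ n
  rcases lo_tri hord 1 (towerHom F₀ F₁ lt₀ lt₁ n g) with hlt | heq | hlt
  · exact Or.inl ⟨n, hmin, hn, hlt⟩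
  · exact absurd heq.symm hn
  · refine Or.inr ⟨n, ?_, ?_, ?_⟩
    · intro m hm
      rw [map_inv, hmin m hm, inv_one]
    · rw [map_inv]
      exact fun hh => hn (by rwa [inv_eq_one] at hh)
    · rw [map_inv]
      exact (lo_one_lt_inv hord).2 hlt

theorem posC_not_both (h₀ : IsLeftOrder lt₀) (h₁ : IsLeftOrder lt₁) {g : Coprod F₀ F₁} (h1 : posC F₀ F₁ lt₀ lt₁ g)
    (h2 : posC F₀ F₁ lt₀ lt₁ g⁻¹) : False := by
  obtain ⟨n, hn1, hn2, hn3⟩ := h1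
  obtain ⟨k, hk1, hk2, hk3⟩ := h2
  have hnk : n = k := by
    rcases lt_trichotomy n k with h | h | h
    · exfalso
      have := hk1 n h
      rw [map_inv, inv_eq_one] at this
      exact hn2 this
    · exact h
    · exfalso
      have := hn1 k h
      rw [map_inv, this, inv_one] at hk2
      exact hk2 rfl
  subst hnk
  rw [map_inv] at hk3
  exact lo_not_both (tower_isLeftOrder F₀ F₁ lt₀ lt₁ h₀ h₁ n) hn3 hk3

end Cone

section FrakDef

open Monoid

variable (F₀ F₁ : Type u) [Group F₀] [Group F₁]
variable (lt₀ : F₀ → F₀ → Prop) (lt₁ : F₁ → F₁ → Prop)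

/-- The functorial order on the coproduct. -/
def FrakRel : Coprod F₀ F₁ → Coprod F₀ F₁ → Prop :=
  fun x y => posC F₀ F₁ lt₀ lt₁ (x⁻¹ * y)

variable {F₀ F₁ lt₀ lt₁}

theorem frak_isLeftOrder (h₀ : IsLeftOrder lt₀) (h₁ : IsLeftOrder lt₁) :
    IsLeftOrder (FrakRel F₀ F₁ lt₀ lt₁) :=
  isLeftOrder_of_cone _ posC_one (fun _ _ ha hb => posC_mul h₀ h₁ ha hb)
    (fun _ ha => posC_total h₀ h₁ ha) (fun _ ha hb => posC_not_both h₀ h₁ ha hb)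

theorem posC_inl (h₀ : IsLeftOrder lt₀) {z : F₀} : posC F₀ F₁ lt₀ lt₁ (Coprod.inl z) ↔ lt₀ 1 z := by
  constructor
  · rintro ⟨n, hn1, hn2, hn3⟩
    have hz : z ≠ 1 := by
      rintro rfl
      exact hn2 (by rw [map_one, map_one])
    have hth : towerHom F₀ F₁ lt₀ lt₁ 0 (Coprod.inl z) = (z, (1 : F₁)) := by
      show Coprod.lift (MonoidHom.inl F₀ F₁) (MonoidHom.inr F₀ F₁) (Coprod.inl z) = _
      rw [Coprod.lift_apply_inl]
      rfl
    have hn0 : n = 0 := by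
      by_contra hne
      have := hn1 0 (Nat.pos_of_ne_zero hne)
      rw [hth] at this
      exact hz (congrArg Prod.fst this)
    subst hn0
    rw [hth] at hn3
    rcases hn3 with h | ⟨h, -⟩
    · exact h
    · exact absurd h.symm hz
  · intro hz
    have hzne : z ≠ 1 := fun hh => lo_irrefl h₀ 1 (hh ▸ hz)
    have hth : towerHom F₀ F₁ lt₀ lt₁ 0 (Coprod.inl z) = (z, (1 : F₁)) := by
      show Coprod.lift (MonoidHom.inl F₀ F₁) (MonoidHom.inr F₀ F₁) (Coprod.inl z) = _
      rw [Coprod.lift_apply_inl]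
      rfl
    refine ⟨0, fun m hm => absurd hm (Nat.not_lt_zero m), ?_, ?_⟩
    · rw [hth]
      exact fun hh => hzne (congrArg Prod.fst hh)
    · rw [hth]
      exact Or.inl hz

theorem posC_inr (h₀ : IsLeftOrder lt₀) (h₁ : IsLeftOrder lt₁) {z : F₁} : posC F₀ F₁ lt₀ lt₁ (Coprod.inr z) ↔ lt₁ 1 z := by
  constructor
  · rintro ⟨n, hn1, hn2, hn3⟩
    have hz : z ≠ 1 := by
      rintro rfl
      exact hn2 (by rw [map_one, map_one])
    have hth : towerHom F₀ F₁ lt₀ lt₁ 0 (Coprod.inr z) = ((1 : F₀), z) := by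
      show Coprod.lift (MonoidHom.inl F₀ F₁) (MonoidHom.inr F₀ F₁) (Coprod.inr z) = _
      rw [Coprod.lift_apply_inr]
      rfl
    have hn0 : n = 0 := by
      by_contra hne
      have := hn1 0 (Nat.pos_of_ne_zero hne)
      rw [hth] at this
      exact hz (congrArg Prod.snd this)
    subst hn0
    rw [hth] at hn3
    rcases hn3 with h | ⟨-, h⟩
    · exact absurd h (lo_irrefl h₀ 1)
    · exact h
  · intro hz
    have hzne : z ≠ 1 := fun hh => lo_irrefl h₁ 1 (hh ▸ hz)
    have hth : towerHom F₀ F₁ lt₀ lt₁ 0 (Coprod.inr z) = ((1 : F₀), z) := by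
      show Coprod.lift (MonoidHom.inl F₀ F₁) (MonoidHom.inr F₀ F₁) (Coprod.inr z) = _
      rw [Coprod.lift_apply_inr]
      rfl
    refine ⟨0, fun m hm => absurd hm (Nat.not_lt_zero m), ?_, ?_⟩
    · rw [hth]
      exact fun hh => hzne (congrArg Prod.snd hh)
    · rw [hth]
      exact Or.inr ⟨rfl, hz⟩

theorem frak_ext_inl (h₀ : IsLeftOrder lt₀) (x y : F₀) :
    lt₀ x y ↔ FrakRel F₀ F₁ lt₀ lt₁ (Coprod.inl x) (Coprod.inl y) := by
  rw [lo_iff_one h₀ x y]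
  unfold FrakRel
  rw [← map_inv, ← map_mul]
  exact (posC_inl h₀).symm

theorem frak_ext_inr (h₀ : IsLeftOrder lt₀) (h₁ : IsLeftOrder lt₁) (x y : F₁) :
    lt₁ x y ↔ FrakRel F₀ F₁ lt₀ lt₁ (Coprod.inr x) (Coprod.inr y) := by
  rw [lo_iff_one h₁ x y]
  unfold FrakRel
  rw [← map_inv, ← map_mul]
  exact (posC_inr h₀ h₁).symm

end FrakDef

section Functorial

open Monoid

/-- Order preservation for an unbundled map. -/
def Pres {A B : Type*} (ltA : A → A → Prop) (ltB : B → B → Prop) (f : A → B) : Prop :=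
  ∀ x y, ltA x y → ltB (f x) (f y)

theorem pres_inj {A B : Type u} [Group A] [Group B] {ltA : A → A → Prop} {ltB : B → B → Prop}
    {f : A → B} (hA : IsLeftOrder ltA) (hB : IsLeftOrder ltB) (hf : Pres ltA ltB f) :
    Function.Injective f := by
  intro x y hxy
  by_contra hne
  rcases lo_tri hA x y with h | h | h
  · exact lo_irrefl hB (f x) (by nth_rewrite 2 [hxy] at *; exact hxy ▸ hf x y h)
  · exact hne h
  · exact lo_irrefl hB (f y) (hxy ▸ hf y x h)

theorem posF_mapDomain {A B : Type u} [Group A] [Group B] {ltA : A → A → Prop}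
    {ltB : B → B → Prop} {f : A →* B} (hA : IsLeftOrder ltA) (hB : IsLeftOrder ltB)
    (hf : Pres ltA ltB f) {g : A →₀ ℤ} (hg : posF ltA g) :
    posF ltB (Finsupp.mapDomain f g) := by
  classical
  have hinj : Function.Injective f := pres_inj hA hB hf
  obtain ⟨a, ha, hav, hmin⟩ := hg
  refine ⟨f a, ?_, ?_, ?_⟩
  · rw [Finsupp.mapDomain_support_of_injective hinj]
    exact Finset.mem_image.2 ⟨a, ha, rfl⟩
  · rwa [Finsupp.mapDomain_apply hinj]
  · intro b hb hba
    rw [Finsupp.mapDomain_support_of_injective hinj] at hb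
    obtain ⟨b', hb', rfl⟩ := Finset.mem_image.1 hb
    exact hf a b' (hmin b' hb' (fun hh => hba (by rw [hh])))

/-- The induced map on one step of the tower. -/
noncomputable def stepMap {L L' : LO.{u}} (ψ : L.G →* L'.G) : (Step L).G →* (Step L').G where
  toFun z := ⟨AddMonoidHom.toMultiplicative (Finsupp.mapDomain.addMonoidHom ψ) z.left,
    ψ z.right⟩
  map_one' := by
    refine SemidirectProduct.ext ?_ ?_
    · show AddMonoidHom.toMultiplicative (Finsupp.mapDomain.addMonoidHom ψ)
        (1 : Multiplicative (L.G →₀ ℤ)) = 1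
      exact map_one _
    · exact map_one ψ
  map_mul' z w := by
    have hshift : ∀ (q : L.G) (g : L.G →₀ ℤ),
        Finsupp.mapDomain ψ (Finsupp.equivMapDomain (Equiv.mulLeft q) g) =
          Finsupp.equivMapDomain (Equiv.mulLeft (ψ q)) (Finsupp.mapDomain ψ g) := by
      intro q g
      induction g using Finsupp.induction_linear with
      | zero => simp
      | add f₁ f₂ hf₁ hf₂ =>
        simp only [← Finsupp.domCongr_apply] at hf₁ hf₂ ⊢
        simp only [map_add, Finsupp.mapDomain_add, hf₁, hf₂]
      | single x c =>
        rw [Finsupp.equivMapDomain_single, Finsupp.mapDomain_single, Finsupp.mapDomain_single,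
          Finsupp.equivMapDomain_single]
        simp [map_mul]
    refine SemidirectProduct.ext ?_ ?_
    · show AddMonoidHom.toMultiplicative (Finsupp.mapDomain.addMonoidHom ψ)
        ((z * w).left) = _
      erw [SemidirectProduct.mul_left]
      rw [map_mul]
      show _ = AddMonoidHom.toMultiplicative (Finsupp.mapDomain.addMonoidHom ψ) z.left *
        actQ L' (ψ z.right) (AddMonoidHom.toMultiplicative (Finsupp.mapDomain.addMonoidHom ψ) w.left)
      congr 1
      apply Multiplicative.toAdd.injective
      show Finsupp.mapDomain ψ (Multiplicative.toAdd (actQ L z.right w.left)) =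
        Multiplicative.toAdd (actQ L' (ψ z.right)
          (AddMonoidHom.toMultiplicative (Finsupp.mapDomain.addMonoidHom ψ) w.left))
      have h1 : Multiplicative.toAdd (actQ L z.right w.left) =
          Finsupp.equivMapDomain (Equiv.mulLeft z.right) (Multiplicative.toAdd w.left) := rfl
      have h2 : Multiplicative.toAdd (actQ L' (ψ z.right)
          (AddMonoidHom.toMultiplicative (Finsupp.mapDomain.addMonoidHom ψ) w.left)) =
          Finsupp.equivMapDomain (Equiv.mulLeft (ψ z.right))
            (Finsupp.mapDomain ψ (Multiplicative.toAdd w.left)) := rfl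
      rw [h1, h2, hshift]
    · show ψ (z * w).right = ψ z.right * ψ w.right
      erw [SemidirectProduct.mul_right, map_mul]

theorem stepMap_pres {L L' : LO.{u}} (hL : IsLeftOrder L.lt) (hL' : IsLeftOrder L'.lt)
    {ψ : L.G →* L'.G} (hψ : Pres L.lt L'.lt ψ) :
    Pres (Step L).lt (Step L').lt (stepMap ψ) := by
  have hpos : ∀ z, stepPos L z → stepPos L' (stepMap ψ z) := by
    intro z hz
    rcases hz with hz | ⟨hz1, hz2⟩
    · left
      show L'.lt 1 (ψ z.right)
      have := hψ 1 z.right hz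
      rwa [map_one] at this
    · right
      constructor
      · show ψ z.right = 1
        rw [hz1, map_one]
      · show posF L'.lt (Multiplicative.toAdd
          (AddMonoidHom.toMultiplicative (Finsupp.mapDomain.addMonoidHom ψ) z.left))
        exact posF_mapDomain hL hL' hψ hz2
  intro x y hxy
  show stepPos L' ((stepMap ψ x)⁻¹ * stepMap ψ y)
  rw [← map_inv, ← map_mul]
  exact hpos _ hxy

end Functorial

section TowMap

open Monoid

variable {F₀ F₁ G₀ G₁ : Type u} [Group F₀] [Group F₁] [Group G₀] [Group G₁]
variable (lt₀ : F₀ → F₀ → Prop) (lt₁ : F₁ → F₁ → Prop)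
variable (lt₀' : G₀ → G₀ → Prop) (lt₁' : G₁ → G₁ → Prop)
variable (φ₀ : F₀ →* G₀) (φ₁ : F₁ →* G₁)

theorem mapDomain_dd {L L' : LO.{u}} (ψ : L.G →* L'.G) (x : L.G) :
    Finsupp.mapDomain ψ (dd L x) = dd L' (ψ x) := by
  rw [dd, dd]
  show (Finsupp.mapDomain.addMonoidHom (⇑ψ)) (Finsupp.single x 1 - Finsupp.single 1 1) = _
  rw [map_sub]
  show Finsupp.mapDomain ψ (Finsupp.single x 1) - Finsupp.mapDomain ψ (Finsupp.single 1 1) = _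
  rw [Finsupp.mapDomain_single, Finsupp.mapDomain_single, map_one]

/-- The induced maps on the towers. -/
noncomputable def towMap : ∀ n,
    (towerL F₀ F₁ lt₀ lt₁ n).G →* (towerL G₀ G₁ lt₀' lt₁' n).G
  | 0 => φ₀.prodMap φ₁
  | n + 1 => stepMap (towMap n)

theorem towMap_pres (h₀ : IsLeftOrder lt₀) (h₁ : IsLeftOrder lt₁)
    (h₀' : IsLeftOrder lt₀') (h₁' : IsLeftOrder lt₁')
    (hp₀ : Pres lt₀ lt₀' φ₀) (hp₁ : Pres lt₁ lt₁' φ₁) :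
    ∀ n, Pres (towerL F₀ F₁ lt₀ lt₁ n).lt (towerL G₀ G₁ lt₀' lt₁' n).lt
      (towMap lt₀ lt₁ lt₀' lt₁' φ₀ φ₁ n)
  | 0 => by
    rintro ⟨a, b⟩ ⟨c, d⟩ (h | ⟨hac, h⟩)
    · refine Or.inl ?_
      show lt₀' ((φ₀.prodMap φ₁) (a, b)).1 ((φ₀.prodMap φ₁) (c, d)).1
      exact hp₀ a c h
    · refine Or.inr ⟨?_, ?_⟩
      · show ((φ₀.prodMap φ₁) (a, b)).1 = ((φ₀.prodMap φ₁) (c, d)).1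
        show φ₀ a = φ₀ c
        rw [show a = c from hac]
      · show lt₁' ((φ₀.prodMap φ₁) (a, b)).2 ((φ₀.prodMap φ₁) (c, d)).2
        exact hp₁ b d h
  | n + 1 =>
    stepMap_pres (tower_isLeftOrder F₀ F₁ lt₀ lt₁ h₀ h₁ n)
      (tower_isLeftOrder G₀ G₁ lt₀' lt₁' h₀' h₁' n)
      (towMap_pres h₀ h₁ h₀' h₁' hp₀ hp₁ n)

theorem towMap_compat : ∀ n,
    (towerHom G₀ G₁ lt₀' lt₁' n).comp (Coprod.map φ₀ φ₁) =
      (towMap lt₀ lt₁ lt₀' lt₁' φ₀ φ₁ n).comp (towerHom F₀ F₁ lt₀ lt₁ n) := by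
  intro n
  induction n with
  | zero =>
    apply Coprod.hom_ext
    · ext x
      show towerHom G₀ G₁ lt₀' lt₁' 0 (Coprod.map φ₀ φ₁ (Coprod.inl x)) =
        (φ₀.prodMap φ₁) (towerHom F₀ F₁ lt₀ lt₁ 0 (Coprod.inl x))
      rw [Coprod.map_apply_inl]
      show Coprod.lift (MonoidHom.inl G₀ G₁) (MonoidHom.inr G₀ G₁) (Coprod.inl (φ₀ x)) =
        (φ₀.prodMap φ₁) (Coprod.lift (MonoidHom.inl F₀ F₁) (MonoidHom.inr F₀ F₁) (Coprod.inl x))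
      rw [Coprod.lift_apply_inl, Coprod.lift_apply_inl]
      show ((φ₀ x, 1) : G₀ × G₁) = (φ₀ x, φ₁ 1)
      rw [map_one]
    · ext x
      show towerHom G₀ G₁ lt₀' lt₁' 0 (Coprod.map φ₀ φ₁ (Coprod.inr x)) =
        (φ₀.prodMap φ₁) (towerHom F₀ F₁ lt₀ lt₁ 0 (Coprod.inr x))
      rw [Coprod.map_apply_inr]
      show Coprod.lift (MonoidHom.inl G₀ G₁) (MonoidHom.inr G₀ G₁) (Coprod.inr (φ₁ x)) =
        (φ₀.prodMap φ₁) (Coprod.lift (MonoidHom.inl F₀ F₁) (MonoidHom.inr F₀ F₁) (Coprod.inr x))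
      rw [Coprod.lift_apply_inr, Coprod.lift_apply_inr]
      show ((1, φ₁ x) : G₀ × G₁) = (φ₀ 1, φ₁ x)
      rw [map_one]
  | succ n ih =>
    have ihapp : ∀ x : Coprod F₀ F₁,
        towerHom G₀ G₁ lt₀' lt₁' n (Coprod.map φ₀ φ₁ x) =
          towMap lt₀ lt₁ lt₀' lt₁' φ₀ φ₁ n (towerHom F₀ F₁ lt₀ lt₁ n x) :=
      fun x => DFunLike.congr_fun ih x
    apply Coprod.hom_ext
    · ext a
      show towerHom G₀ G₁ lt₀' lt₁' (n + 1) (Coprod.map φ₀ φ₁ (Coprod.inl a)) =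
        stepMap (towMap lt₀ lt₁ lt₀' lt₁' φ₀ φ₁ n) (towerHom F₀ F₁ lt₀ lt₁ (n + 1) (Coprod.inl a))
      rw [Coprod.map_apply_inl, thom_inl, thom_inl]
      have hI : towerHom G₀ G₁ lt₀' lt₁' n (Coprod.inl (φ₀ a)) =
          towMap lt₀ lt₁ lt₀' lt₁' φ₀ φ₁ n (towerHom F₀ F₁ lt₀ lt₁ n (Coprod.inl a)) := by
        rw [← Coprod.map_apply_inl φ₀ φ₁ a]
        exact ihapp _
      refine SemidirectProduct.ext ?_ ?_
      · show Multiplicative.ofAdd (dd _ (towerHom G₀ G₁ lt₀' lt₁' n (Coprod.inl (φ₀ a)))) =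
          AddMonoidHom.toMultiplicative
            (Finsupp.mapDomain.addMonoidHom (towMap lt₀ lt₁ lt₀' lt₁' φ₀ φ₁ n))
            (Multiplicative.ofAdd (dd _ (towerHom F₀ F₁ lt₀ lt₁ n (Coprod.inl a))))
        apply Multiplicative.toAdd.injective
        show dd _ (towerHom G₀ G₁ lt₀' lt₁' n (Coprod.inl (φ₀ a))) =
          Finsupp.mapDomain (towMap lt₀ lt₁ lt₀' lt₁' φ₀ φ₁ n)
            (dd _ (towerHom F₀ F₁ lt₀ lt₁ n (Coprod.inl a)))
        rw [mapDomain_dd, hI]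
      · show towerHom G₀ G₁ lt₀' lt₁' n (Coprod.inl (φ₀ a)) =
          towMap lt₀ lt₁ lt₀' lt₁' φ₀ φ₁ n (towerHom F₀ F₁ lt₀ lt₁ n (Coprod.inl a))
        exact hI
    · ext b
      show towerHom G₀ G₁ lt₀' lt₁' (n + 1) (Coprod.map φ₀ φ₁ (Coprod.inr b)) =
        stepMap (towMap lt₀ lt₁ lt₀' lt₁' φ₀ φ₁ n) (towerHom F₀ F₁ lt₀ lt₁ (n + 1) (Coprod.inr b))
      rw [Coprod.map_apply_inr, thom_inr, thom_inr]
      have hI : towerHom G₀ G₁ lt₀' lt₁' n (Coprod.inr (φ₁ b)) =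
          towMap lt₀ lt₁ lt₀' lt₁' φ₀ φ₁ n (towerHom F₀ F₁ lt₀ lt₁ n (Coprod.inr b)) := by
        rw [← Coprod.map_apply_inr φ₀ φ₁ b]
        exact ihapp _
      refine SemidirectProduct.ext ?_ ?_
      · show (1 : Multiplicative ((towerL G₀ G₁ lt₀' lt₁' n).G →₀ ℤ)) =
          AddMonoidHom.toMultiplicative
            (Finsupp.mapDomain.addMonoidHom (towMap lt₀ lt₁ lt₀' lt₁' φ₀ φ₁ n)) 1
        rw [map_one]
      · exact hI

theorem posC_map (h₀ : IsLeftOrder lt₀) (h₁ : IsLeftOrder lt₁)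
    (h₀' : IsLeftOrder lt₀') (h₁' : IsLeftOrder lt₁')
    (hp₀ : Pres lt₀ lt₀' φ₀) (hp₁ : Pres lt₁ lt₁' φ₁)
    {g : Coprod F₀ F₁} (hg : posC F₀ F₁ lt₀ lt₁ g) :
    posC G₀ G₁ lt₀' lt₁' (Coprod.map φ₀ φ₁ g) := by
  obtain ⟨n, h1, h2, h3⟩ := hg
  have hcomp : ∀ m (x : Coprod F₀ F₁),
      towerHom G₀ G₁ lt₀' lt₁' m (Coprod.map φ₀ φ₁ x) =
        towMap lt₀ lt₁ lt₀' lt₁' φ₀ φ₁ m (towerHom F₀ F₁ lt₀ lt₁ m x) :=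
    fun m x => DFunLike.congr_fun (towMap_compat lt₀ lt₁ lt₀' lt₁' φ₀ φ₁ m) x
  refine ⟨n, ?_, ?_, ?_⟩
  · intro m hm
    rw [hcomp, h1 m hm, map_one]
  · rw [hcomp]
    intro hcontra
    apply h2
    have hinj := pres_inj (tower_isLeftOrder F₀ F₁ lt₀ lt₁ h₀ h₁ n)
      (tower_isLeftOrder G₀ G₁ lt₀' lt₁' h₀' h₁' n)
      (towMap_pres lt₀ lt₁ lt₀' lt₁' φ₀ φ₁ h₀ h₁ h₀' h₁' hp₀ hp₁ n)
    apply hinj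
    rw [hcontra, map_one]
  · rw [hcomp]
    have := towMap_pres lt₀ lt₁ lt₀' lt₁' φ₀ φ₁ h₀ h₁ h₀' h₁' hp₀ hp₁ n 1
      (towerHom F₀ F₁ lt₀ lt₁ n g) h3
    rwa [map_one] at this

theorem frak_map (h₀ : IsLeftOrder lt₀) (h₁ : IsLeftOrder lt₁)
    (h₀' : IsLeftOrder lt₀') (h₁' : IsLeftOrder lt₁')
    (hp₀ : Pres lt₀ lt₀' φ₀) (hp₁ : Pres lt₁ lt₁' φ₁)
    {x y : Coprod F₀ F₁} (hxy : FrakRel F₀ F₁ lt₀ lt₁ x y) :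
    FrakRel G₀ G₁ lt₀' lt₁' (Coprod.map φ₀ φ₁ x) (Coprod.map φ₀ φ₁ y) := by
  unfold FrakRel at hxy ⊢
  rw [← map_inv, ← map_mul]
  exact posC_map lt₀ lt₁ lt₀' lt₁' φ₀ φ₁ h₀ h₁ h₀' h₁' hp₀ hp₁ hxy

end TowMap

end FPO

/-- There is a functorial assignment of a left-invariant ordering on the free product of
two left-ordered groups, extending the given orderings along the canonical inclusions,
such that free products of order-preserving homomorphisms are order-preserving. -/
theorem functorial_free_product_left_ordering :
    ∃ Frak : ∀ (F₀ F₁ : Type u) [Group F₀] [Group F₁],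
        (F₀ → F₀ → Prop) → (F₁ → F₁ → Prop) →
        (Monoid.Coprod F₀ F₁ → Monoid.Coprod F₀ F₁ → Prop),
      ∀ (F₀ F₁ : Type u) [Group F₀] [Group F₁]
        (lt₀ : F₀ → F₀ → Prop) (lt₁ : F₁ → F₁ → Prop),
        IsLeftOrder lt₀ → IsLeftOrder lt₁ →
        (IsLeftOrder (Frak F₀ F₁ lt₀ lt₁) ∧
          (∀ x y : F₀, lt₀ x y ↔
            Frak F₀ F₁ lt₀ lt₁ (Monoid.Coprod.inl x) (Monoid.Coprod.inl y)) ∧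
          (∀ x y : F₁, lt₁ x y ↔
            Frak F₀ F₁ lt₀ lt₁ (Monoid.Coprod.inr x) (Monoid.Coprod.inr y))) ∧
        ∀ (G₀ G₁ : Type u) [Group G₀] [Group G₁]
          (lt₀' : G₀ → G₀ → Prop) (lt₁' : G₁ → G₁ → Prop),
          IsLeftOrder lt₀' → IsLeftOrder lt₁' →
          ∀ (φ₀ : F₀ →* G₀) (φ₁ : F₁ →* G₁),
            (∀ x y : F₀, lt₀ x y → lt₀' (φ₀ x) (φ₀ y)) →
            (∀ x y : F₁, lt₁ x y → lt₁' (φ₁ x) (φ₁ y)) →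
            ∀ x y : Monoid.Coprod F₀ F₁, Frak F₀ F₁ lt₀ lt₁ x y →
              Frak G₀ G₁ lt₀' lt₁'
                (Monoid.Coprod.map φ₀ φ₁ x) (Monoid.Coprod.map φ₀ φ₁ y) := by
  refine ⟨fun F₀ F₁ _ _ lt₀ lt₁ => FPO.FrakRel F₀ F₁ lt₀ lt₁, ?_⟩
  intro F₀ F₁ _ _ lt₀ lt₁ h₀ h₁
  refine ⟨⟨FPO.frak_isLeftOrder h₀ h₁, fun x y => FPO.frak_ext_inl h₀ x y,
    fun x y => FPO.frak_ext_inr h₀ h₁ x y⟩, ?_⟩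
  intro G₀ G₁ _ _ lt₀' lt₁' h₀' h₁' φ₀ φ₁ hp₀ hp₁ x y hxy
  exact FPO.frak_map lt₀ lt₁ lt₀' lt₁' φ₀ φ₁ h₀ h₁ h₀' h₁' hp₀ hp₁ hxy
end

section
/- Let (G, <) be an ordered group (bi-invariant strict total order). In the integral group ring ℤ[G] (MonoidAlgebra ℤ G), let P be the set of nonzero elements whose coefficient at the <-maximal element of their support is a positive integer. Then P is closed under addition and under multiplication, and for every nonzero x ∈ ℤ[G] exactly one of x ∈ P or −x ∈ P holds; hence ℤ[G] is an ordered ring with positive cone P. -/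
/-- A bi-invariant strict total order on a group. -/
def IsBiOrder {G : Type*} [Group G] (lt : G → G → Prop) : Prop :=
  IsStrictTotalOrder G lt ∧ (∀ x y z : G, lt x y → lt (x * z) (y * z)) ∧
    (∀ x y z : G, lt x y → lt (z * x) (z * y))

/-- The positive cone of the integral group ring of a group ordered by `lt`:
the nonzero elements whose coefficient at the `lt`-maximal element of their support is a
positive integer. -/
def posCone {G : Type*} [Group G] (lt : G → G → Prop) : Set (MonoidAlgebra ℤ G) :=
  {x | x ≠ 0 ∧ ∃ g ∈ x.coeff.support, (∀ h ∈ x.coeff.support, h ≠ g → lt h g) ∧ 0 < x.coeff g}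

/-- For an ordered group `(G, lt)` the set `posCone lt` of elements of `ℤ[G]` with positive
leading coefficient is closed under addition and multiplication, and for each nonzero `x`
exactly one of `x`, `-x` lies in it: `ℤ[G]` is an ordered ring with this positive cone. -/
theorem group_ring_ordered {G : Type*} [Group G] (lt : G → G → Prop)
    (h : IsBiOrder lt) :
    (∀ x ∈ posCone lt, ∀ y ∈ posCone lt, x + y ∈ posCone lt) ∧
    (∀ x ∈ posCone lt, ∀ y ∈ posCone lt, x * y ∈ posCone lt) ∧
    ∀ x : MonoidAlgebra ℤ G, x ≠ 0 → Xor' (x ∈ posCone lt) (-x ∈ posCone lt) := by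
  classical
  obtain ⟨hSTO, hR, hL⟩ := h
  haveI := hSTO
  have htri : ∀ a b : G, lt a b ∨ a = b ∨ lt b a := fun a b => trichotomous a b
  have htrans : ∀ {a b c : G}, lt a b → lt b c → lt a c := fun hab hbc => _root_.trans hab hbc
  have hirr : ∀ a : G, ¬ lt a a := fun a => irrefl a
  have hasymm : ∀ {a b : G}, lt a b → ¬ lt b a := fun hab hba => hirr _ (htrans hab hba)
  -- existence of a maximum of a nonempty finset
  have hmax : ∀ s : Finset G, s.Nonempty → ∃ a ∈ s, ∀ b ∈ s, b ≠ a → lt b a := by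
    intro s
    induction s using Finset.induction_on with
    | empty => intro hs; exact absurd hs (by simp)
    | @insert a s ha ih =>
      intro _
      rcases s.eq_empty_or_nonempty with rfl | hs
      · exact ⟨a, by simp, by simp⟩
      · obtain ⟨m, hm, hmt⟩ := ih hs
        have ham : a ≠ m := fun hh => ha (hh ▸ hm)
        rcases htri a m with h1 | h1 | h1
        · refine ⟨m, Finset.mem_insert_of_mem hm, ?_⟩
          intro b hb hbm
          rcases Finset.mem_insert.1 hb with rfl | hb
          · exact h1
          · exact hmt b hb hbm
        · exact absurd h1 ham
        · refine ⟨a, Finset.mem_insert_self a s, ?_⟩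
          intro b hb hba
          rcases Finset.mem_insert.1 hb with rfl | hb
          · exact absurd rfl hba
          · rcases eq_or_ne b m with rfl | hbm
            · exact h1
            · exact htrans (hmt b hb hbm) h1
  refine ⟨?_, ?_, ?_⟩
  · -- addition
    rintro x ⟨hx0, a, haS, haM, haP⟩ y ⟨hy0, b, hbS, hbM, hbP⟩
    have hsupp : ∀ g, g ∈ (x + y).coeff.support → g ∈ x.coeff.support ∪ y.coeff.support :=
      fun g hg => Finsupp.support_add hg
    rcases htri a b with hab | rfl | hab
    · -- b is the leader
      have hxb : x.coeff b = 0 := by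
        by_contra hxb
        rcases eq_or_ne b a with rfl | hba
        · exact hirr _ hab
        · exact hasymm hab (haM b (Finsupp.mem_support_iff.2 hxb) hba)
      have hcoef : (x + y).coeff b = y.coeff b := by
        rw [MonoidAlgebra.coeff_add, Finsupp.add_apply, hxb, zero_add]
      have hne : (x + y).coeff b ≠ 0 := by rw [hcoef]; exact hbP.ne'
      refine ⟨fun hz => hne (by simp [hz]), b, Finsupp.mem_support_iff.2 hne, ?_, by
        rw [hcoef]; exact hbP⟩
      intro g hg hgb
      rcases Finset.mem_union.1 (hsupp g hg) with hgx | hgy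
      · rcases eq_or_ne g a with rfl | hga
        · exact hab
        · exact htrans (haM g hgx hga) hab
      · exact hbM g hgy hgb
    · -- same leader
      have hcoef : (x + y).coeff a = x.coeff a + y.coeff a := Finsupp.add_apply x.coeff y.coeff a
      have hpos : 0 < (x + y).coeff a := by rw [hcoef]; exact add_pos haP hbP
      refine ⟨fun hz => hpos.ne' (by simp [hz]), a, Finsupp.mem_support_iff.2 hpos.ne', ?_, hpos⟩
      intro g hg hga
      rcases Finset.mem_union.1 (hsupp g hg) with hgx | hgy
      · exact haM g hgx hga
      · exact hbM g hgy hga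
    · -- a is the leader
      have hyb : y.coeff a = 0 := by
        by_contra hya
        rcases eq_or_ne a b with rfl | hba
        · exact hirr _ hab
        · exact hasymm hab (hbM a (Finsupp.mem_support_iff.2 hya) hba)
      have hcoef : (x + y).coeff a = x.coeff a := by
        rw [MonoidAlgebra.coeff_add, Finsupp.add_apply, hyb, add_zero]
      have hne : (x + y).coeff a ≠ 0 := by rw [hcoef]; exact haP.ne'
      refine ⟨fun hz => hne (by simp [hz]), a, Finsupp.mem_support_iff.2 hne, ?_, by
        rw [hcoef]; exact haP⟩
      intro g hg hga
      rcases Finset.mem_union.1 (hsupp g hg) with hgx | hgy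
      · exact haM g hgx hga
      · rcases eq_or_ne g b with rfl | hgb
        · exact hab
        · exact htrans (hbM g hgy hgb) hab
  · -- multiplication
    rintro x ⟨hx0, a, haS, haM, haP⟩ y ⟨hy0, b, hbS, hbM, hbP⟩
    -- key: if u ∈ supp x, v ∈ supp y and (u,v) ≠ (a,b) then lt (u*v) (a*b)
    have hlead : ∀ u ∈ x.coeff.support, ∀ v ∈ y.coeff.support, ¬(u = a ∧ v = b) → lt (u * v) (a * b) := by
      intro u hu v hv hne
      rcases eq_or_ne u a with rfl | hua
      · rcases eq_or_ne v b with rfl | hvb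
        · exact absurd ⟨rfl, rfl⟩ hne
        · exact hL v b u (hbM v hv hvb)
      · have h1 : lt (u * v) (a * v) := hR u a v (haM u hu hua)
        rcases eq_or_ne v b with rfl | hvb
        · exact h1
        · exact htrans h1 (hL v b a (hbM v hv hvb))
    have key : (x * y).coeff (a * b) = x.coeff a * y.coeff b := by
      rw [MonoidAlgebra.mul_apply, Finsupp.sum, Finset.sum_eq_single a]
      · rw [Finsupp.sum, Finset.sum_eq_single b]
        · rw [if_pos rfl]
        · intro v hv hvb
          rw [if_neg]
          exact fun hc => hvb (mul_left_cancel hc)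
        · intro hb'
          simp [Finsupp.notMem_support_iff.1 hb']
      · intro u hu hua
        rw [Finsupp.sum]
        apply Finset.sum_eq_zero
        intro v hv
        rw [if_neg]
        exact fun hc => hirr _ (hc ▸ hlead u hu v hv (fun hp => hua hp.1))
      · intro ha'
        exact absurd haS ha'
    have hpos : 0 < (x * y).coeff (a * b) := by rw [key]; exact mul_pos haP hbP
    refine ⟨fun hz => hpos.ne' (by simp [hz]), a * b, Finsupp.mem_support_iff.2 hpos.ne', ?_, hpos⟩
    intro g hg hgab
    have hg' := MonoidAlgebra.support_coeff_mul_subset x y hg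
    obtain ⟨u, hu, v, hv, rfl⟩ := Finset.mem_mul.1 hg'
    refine hlead u hu v hv ?_
    rintro ⟨rfl, rfl⟩
    exact hgab rfl
  · -- trichotomy
    intro x hx0
    have hsupp : x.coeff.support.Nonempty := Finsupp.support_nonempty_iff.2 (mt MonoidAlgebra.coeff_eq_zero.1 hx0)
    obtain ⟨a, haS, haM⟩ := hmax x.coeff.support hsupp
    have hxa : x.coeff a ≠ 0 := Finsupp.mem_support_iff.1 haS
    have hnegsupp : (-x).coeff.support = x.coeff.support := Finsupp.support_neg x.coeff
    rcases lt_or_gt_of_ne hxa with hneg | hpos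
    · -- -x ∈ posCone, x ∉ posCone
      refine Or.inr ⟨⟨by simpa using hx0, a, by rw [hnegsupp]; exact haS, ?_, by
        rw [MonoidAlgebra.coeff_neg, Finsupp.neg_apply]; omega⟩, ?_⟩
      · intro g hg hga
        exact haM g (hnegsupp ▸ hg) hga
      · rintro ⟨-, b, hbS, hbM, hbP⟩
        rcases eq_or_ne b a with rfl | hba
        · omega
        · exact hasymm (hbM a haS (Ne.symm hba)) (haM b hbS hba)
    · refine Or.inl ⟨⟨hx0, a, haS, haM, hpos⟩, ?_⟩
      rintro ⟨-, b, hbS, hbM, hbP⟩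
      rw [hnegsupp] at hbS
      rcases eq_or_ne b a with rfl | hba
      · rw [MonoidAlgebra.coeff_neg, Finsupp.neg_apply] at hbP
        omega
      · exact hasymm (haM b hbS hba) (hbM a (hnegsupp ▸ haS) (Ne.symm hba))
end
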